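/- Let x̄ be feasible for the disjunctive program (P), assume the generalized Guignard constraint qualification GGCQ holds at x̄, and let conv T_lin(x̄) be finitely generated by a set 𝒰 = {u₁,…,u_N} ⊆ T_lin(x̄), i.e. conv T_lin(x̄) = {Σᵢ αᵢuᵢ : αᵢ ≥ 0}. Then the following are equivalent: (a) x̄ is B-stationary; (b) ∇f(x̄)u ≥ 0 for all u ∈ T_lin(x̄); (c) x̄ is extended M-stationary; (d) Λ¹(x̄;u) ≠ ∅ for every u ∈ 𝒰 ∩ 𝓒(x̄). -/

import Mathlib

noncomputable section

open Filter Topology Set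

/-- Euclidean space `ℝ^n`. -/
abbrev Euc (n : ℕ) : Type := EuclideanSpace ℝ (Fin n)

variable {E : Type*} [NormedAddCommGroup E] [NormedSpace ℝ E]
variable {Y : Type*} [NormedAddCommGroup Y] [NormedSpace ℝ Y]

/-- The contingent (Bouligand/tangent) cone `T(x;Ω)`; empty when `x ∉ Ω`. -/
def tcone (Ω : Set E) (x : E) : Set E :=
  {u | x ∈ Ω ∧ ∃ t : ℕ → ℝ, ∃ w : ℕ → E, (∀ k, 0 < t k) ∧
    Tendsto t atTop (𝓝 0) ∧ Tendsto w atTop (𝓝 u) ∧ ∀ k, x + t k • w k ∈ Ω}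

/-- The Fréchet (regular) normal cone `N̂(x;Ω)`, viewed as a set of continuous
linear functionals; empty when `x ∉ Ω`. -/
def fnc (Ω : Set E) (x : E) : Set (E →L[ℝ] ℝ) :=
  {ξ | x ∈ Ω ∧ ∀ ε : ℝ, 0 < ε → ∃ δ : ℝ, 0 < δ ∧
    ∀ y ∈ Ω, ‖y - x‖ < δ → ξ (y - x) ≤ ε * ‖y - x‖}

/-- The limiting (Mordukhovich) normal cone `N(x;Ω)`; empty when `x ∉ Ω`. -/
def lnc (Ω : Set E) (x : E) : Set (E →L[ℝ] ℝ) :=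
  {ξ | x ∈ Ω ∧ ∃ xk : ℕ → E, ∃ ξk : ℕ → (E →L[ℝ] ℝ),
    Tendsto xk atTop (𝓝 x) ∧ Tendsto ξk atTop (𝓝 ξ) ∧ ∀ k, ξk k ∈ fnc Ω (xk k)}

/-- The directional limiting normal cone `N(x;Ω;u)`; empty when `x ∉ Ω`. -/
def dlnc (Ω : Set E) (x u : E) : Set (E →L[ℝ] ℝ) :=
  {ξ | x ∈ Ω ∧ ∃ t : ℕ → ℝ, ∃ w : ℕ → E, ∃ ξk : ℕ → (E →L[ℝ] ℝ), (∀ k, 0 < t k) ∧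
    Tendsto t atTop (𝓝 0) ∧ Tendsto w atTop (𝓝 u) ∧ Tendsto ξk atTop (𝓝 ξ) ∧
    ∀ k, ξk k ∈ fnc Ω (x + t k • w k)}

/-- A convex polyhedron: a finite intersection of closed halfspaces. -/
def IsPolyhedron (P : Set E) : Prop :=
  ∃ k : ℕ, ∃ a : Fin k → (E →L[ℝ] ℝ), ∃ b : Fin k → ℝ, P = {x | ∀ j, a j x ≤ b j}

/-- A union of finitely many convex polyhedra. -/
def IsFinUnionPolyhedra (Ω : Set E) : Prop :=
  ∃ p : ℕ, ∃ P : Fin p → Set E, (∀ i, IsPolyhedron (P i)) ∧ Ω = ⋃ i, P i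

/-- The constraint multifunction `M(x) = F(x) - Ω`. -/
def cmap (F : E → Y) (Ω : Set Y) : E → Set Y := fun x => {y | F x - y ∈ Ω}

/-- Metric subregularity of `M` at `(x̄,ȳ) ∈ gph M`. -/
def SubregAt (M : E → Set Y) (x' : E) (y' : Y) : Prop :=
  y' ∈ M x' ∧ ∃ κ : ℝ, 0 < κ ∧ ∃ ε : ℝ, 0 < ε ∧ ∀ x : E, dist x x' < ε →
    EMetric.infEdist x {z | y' ∈ M z} ≤ ENNReal.ofReal κ * EMetric.infEdist y' (M x)

/-- The directional neighborhood `V_{ρ,δ}(u)`. -/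
def dirNbhd (u : E) (ρ δ : ℝ) : Set E :=
  {z | ‖z‖ ≤ ρ ∧ ‖‖u‖ • z - ‖z‖ • u‖ ≤ δ * (‖z‖ * ‖u‖)}

/-- Metric subregularity of `M` in direction `u` at `(x̄,ȳ) ∈ gph M`. -/
def SubregDir (M : E → Set Y) (x' : E) (y' : Y) (u : E) : Prop :=
  y' ∈ M x' ∧ ∃ ρ : ℝ, 0 < ρ ∧ ∃ δ : ℝ, 0 < δ ∧ ∃ κ : ℝ, 0 < κ ∧
    ∀ z ∈ dirNbhd u ρ δ,
      EMetric.infEdist (x' + z) {z' | y' ∈ M z'} ≤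
        ENNReal.ofReal κ * EMetric.infEdist y' (M (x' + z))

/-- Mixed metric regularity/subregularity of `M = (M₁,M₂)` at `(x̄,(ȳ₁,ȳ₂))`. -/
def MixedRegSubreg {Y₁ Y₂ : Type*} [NormedAddCommGroup Y₁] [NormedSpace ℝ Y₁]
    [NormedAddCommGroup Y₂] [NormedSpace ℝ Y₂]
    (M₁ : E → Set Y₁) (M₂ : E → Set Y₂) (x' : E) (y₁' : Y₁) (y₂' : Y₂) : Prop :=
  y₁' ∈ M₁ x' ∧ y₂' ∈ M₂ x' ∧ ∃ κ : ℝ, 0 < κ ∧ ∃ ε : ℝ, 0 < ε ∧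
    ∀ x : E, ∀ y₁ : Y₁, dist x x' < ε → dist y₁ y₁' < ε →
      EMetric.infEdist x {z | y₁ ∈ M₁ z ∧ y₂' ∈ M₂ z} ≤
        ENNReal.ofReal κ * EMetric.infEdist (y₁, y₂') (M₁ x ×ˢ M₂ x)

/-- The multiplier set `Λ¹(x̄;u)` (no splitting of the constraints). -/
def Lam1 {n m : ℕ} (f : Euc n → ℝ) (F : Euc n → Euc m) (Ω : Set (Euc m))
    (xb u : Euc n) : Set (Euc m →L[ℝ] ℝ) :=
  {μ | μ ∈ dlnc Ω (F xb) (fderiv ℝ F xb u) ∧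
    fderiv ℝ f xb + μ.comp (fderiv ℝ F xb) = 0}

namespace Dev

variable {E : Type*} [NormedAddCommGroup E] [NormedSpace ℝ E]


lemma tendsto_one_div_succ : Tendsto (fun k : ℕ => 1 / ((k:ℝ)+1)) atTop (𝓝 0) :=
  tendsto_one_div_add_atTop_nhds_zero_nat

lemma tcone_zero_mem {Ω : Set E} {x : E} (hx : x ∈ Ω) : (0:E) ∈ tcone Ω x := by
  refine ⟨hx, fun k => 1/((k:ℝ)+1), fun _ => 0, fun k => by positivity,
    tendsto_one_div_succ, tendsto_const_nhds, fun k => by simpa using hx⟩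

lemma tcone_smul_mem {Ω : Set E} {x v : E} {s : ℝ} (hs : 0 < s)
    (hv : v ∈ tcone Ω x) : s • v ∈ tcone Ω x := by
  obtain ⟨hx, t, w, htpos, ht0, hwv, hmem⟩ := hv
  refine ⟨hx, fun k => t k / s, fun k => s • w k, fun k => div_pos (htpos k) hs,
    by simpa using ht0.div_const s, hwv.const_smul s, fun k => ?_⟩
  have : (t k / s) • (s • w k) = t k • w k := by
    rw [smul_smul, div_mul_cancel₀]; exact ne_of_gt hs
  rw [this]; exact hmem k

lemma fnc_nonpos_on_tcone {Ω : Set E} {x : E} {ξ : E →L[ℝ] ℝ} (hξ : ξ ∈ fnc Ω x)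
    {v : E} (hv : v ∈ tcone Ω x) : ξ v ≤ 0 := by
  obtain ⟨hx, t, w, htpos, ht0, hwv, hmem⟩ := hv
  have key : ∀ ε : ℝ, 0 < ε → ξ v ≤ ε * ‖v‖ := by
    intro ε hε
    obtain ⟨δ, hδ, hδ'⟩ := hξ.2 ε hε
    have htw : Tendsto (fun k => t k • w k) atTop (𝓝 0) := by
      simpa using ht0.smul hwv
    have hev : ∀ᶠ k in atTop, ξ (w k) ≤ ε * ‖w k‖ := by
      have : ∀ᶠ k in atTop, ‖t k • w k‖ < δ := by
        have := (htw.norm) (by exact gt_mem_nhds (by simpa using hδ))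
        simpa using this
      filter_upwards [this] with k hk
      have h1 := hδ' (x + t k • w k) (hmem k) (by simpa using hk)
      have h2 : ξ (t k • w k) ≤ ε * ‖t k • w k‖ := by simpa using h1
      have h3 : t k * ξ (w k) ≤ ε * (t k * ‖w k‖) := by
        simpa [norm_smul, abs_of_pos (htpos k), mul_assoc] using h2
      have h4 : t k * ξ (w k) ≤ t k * (ε * ‖w k‖) := h3.trans_eq (by ring)
      exact le_of_mul_le_mul_left h4 (htpos k)
    exact le_of_tendsto_of_tendsto ((ξ.continuous.tendsto v).comp hwv)
      (tendsto_const_nhds.mul (hwv.norm)) hev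
  by_contra hpos
  push_neg at hpos
  rcases le_or_gt ‖v‖ 0 with h0 | h0
  · have := key 1 one_pos
    nlinarith [norm_nonneg v]
  · have hk := key (ξ v / (2 * ‖v‖)) (by positivity)
    have h2 : (ξ v / (2 * ‖v‖)) * ‖v‖ = ξ v / 2 := by field_simp
    rw [h2] at hk; linarith

lemma mem_fnc_of_nonpos_on_tcone {n : ℕ} {Ω : Set (Euc n)} {x : Euc n} (hx : x ∈ Ω)
    {ξ : Euc n →L[ℝ] ℝ} (hξ : ∀ v ∈ tcone Ω x, ξ v ≤ 0) : ξ ∈ fnc Ω x := by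
  refine ⟨hx, ?_⟩
  intro ε hε
  by_contra hcon
  push_neg at hcon
  have H : ∀ k : ℕ, ∃ y ∈ Ω, ‖y - x‖ < 1/((k:ℝ)+1) ∧ ε * ‖y - x‖ < ξ (y - x) := by
    intro k
    obtain ⟨y, hy, h1, h2⟩ := hcon (1/((k:ℝ)+1)) (by positivity)
    exact ⟨y, hy, h1, by linarith⟩
  choose y hyΩ hynear hybig using H
  have hpos : ∀ k, 0 < ‖y k - x‖ := by
    intro k
    rcases eq_or_lt_of_le (norm_nonneg (y k - x)) with h | h
    · exfalso
      have h2 := hybig k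
      rw [← h] at h2
      have : y k - x = 0 := by rwa [eq_comm, norm_eq_zero] at h
      rw [this] at h2; simp at h2
    · exact h
  set d : ℕ → Euc n := fun k => ‖y k - x‖⁻¹ • (y k - x) with hd
  have hdnorm : ∀ k, ‖d k‖ = 1 := by
    intro k
    rw [hd]; simp only [norm_smul, norm_inv, norm_norm]
    exact inv_mul_cancel₀ (ne_of_gt (hpos k))
  have hbdd : ∀ k, d k ∈ Metric.closedBall (0 : Euc n) 1 := by
    intro k; simp [hdnorm k]
  obtain ⟨a, _, φ, hφ, hda⟩ := tendsto_subseq_of_bounded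
    (Metric.isBounded_closedBall (x := (0:Euc n)) (r := 1)) hbdd
  have hat : a ∈ tcone Ω x := by
    refine ⟨hx, fun k => ‖y (φ k) - x‖, fun k => d (φ k), fun k => hpos _, ?_, hda, ?_⟩
    · apply squeeze_zero (fun k => le_of_lt (hpos _)) (fun k => le_of_lt (hynear _))
      apply squeeze_zero (fun k => by positivity)
        (fun k => by
          have hkk : k ≤ φ k := hφ.le_apply
          have : (k:ℝ) + 1 ≤ (φ k : ℝ) + 1 := by
            have : (k:ℝ) ≤ (φ k : ℝ) := by exact_mod_cast hkk
            linarith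
          have h1 : 0 < (k:ℝ)+1 := by positivity
          have h2 : 0 < (φ k:ℝ)+1 := by positivity
          exact one_div_le_one_div_of_le h1 this)
        tendsto_one_div_succ
    · intro k
      have : ‖y (φ k) - x‖ • d (φ k) = y (φ k) - x := by
        rw [hd]; simp; rw [smul_smul, mul_inv_cancel₀ (ne_of_gt (hpos _)), one_smul]
      rw [this]; simpa using hyΩ (φ k)
  have hle : ξ a ≤ 0 := hξ a hat
  have hgt : ∀ k, ε < ξ (d (φ k)) := by
    intro k
    have h2 := hybig (φ k)
    have h3 : ξ (d (φ k)) = ‖y (φ k) - x‖⁻¹ * ξ (y (φ k) - x) := by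
      rw [hd]; simp
    rw [h3]
    have h4 : ε * ‖y (φ k) - x‖ * ‖y (φ k) - x‖⁻¹ < ξ (y (φ k) - x) * ‖y (φ k) - x‖⁻¹ := by
      apply mul_lt_mul_of_pos_right h2 (inv_pos.mpr (hpos _))
    calc ε = ε * ‖y (φ k) - x‖ * ‖y (φ k) - x‖⁻¹ := by
            rw [mul_assoc, mul_inv_cancel₀ (ne_of_gt (hpos _)), mul_one]
      _ < ξ (y (φ k) - x) * ‖y (φ k) - x‖⁻¹ := h4
      _ = ‖y (φ k) - x‖⁻¹ * ξ (y (φ k) - x) := by ring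
  have : ε ≤ ξ a := by
    have hconv : Tendsto (fun k => ξ (d (φ k))) atTop (𝓝 (ξ a)) :=
      (ξ.continuous.tendsto a).comp hda
    exact le_of_tendsto_of_tendsto tendsto_const_nhds hconv
      (Eventually.of_forall (fun k => le_of_lt (hgt k)))
  linarith




lemma nonpos_of_forall_pos_le {r c : ℝ} (hc : 0 ≤ c) (h : ∀ ε : ℝ, 0 < ε → r ≤ ε * c) :
    r ≤ 0 := by
  by_contra hr
  push_neg at hr
  rcases eq_or_lt_of_le hc with h0 | h0
  · have := h 1 one_pos; rw [← h0] at this; simp at this; linarith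
  · have hk := h (r / (2 * c)) (by positivity)
    have h2 : (r / (2 * c)) * c = r / 2 := by field_simp
    rw [h2] at hk; linarith

/-- A polyhedron given by inequalities is convex. -/
lemma poly_convex {k : ℕ} (a : Fin k → (E →L[ℝ] ℝ)) (b : Fin k → ℝ) :
    Convex ℝ {x : E | ∀ j, a j x ≤ b j} := by
  intro x hx y hy s r hs hr hsr
  intro j
  have : a j (s • x + r • y) = s * a j x + r * a j y := by simp
  rw [this]
  calc s * a j x + r * a j y ≤ s * b j + r * b j :=
        add_le_add (mul_le_mul_of_nonneg_left (hx j) hs)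
          (mul_le_mul_of_nonneg_left (hy j) hr)
    _ = b j := by rw [← add_mul, hsr, one_mul]

lemma poly_closed {k : ℕ} (a : Fin k → (E →L[ℝ] ℝ)) (b : Fin k → ℝ) :
    IsClosed {x : E | ∀ j, a j x ≤ b j} := by
  have : {x : E | ∀ j, a j x ≤ b j} = ⋂ j, {x | a j x ≤ b j} := by
    ext x; simp
  rw [this]
  exact isClosed_iInter (fun j => isClosed_le (a j).continuous continuous_const)

/-- Exactness of rays in polyhedra: a direction satisfying the active constraints
can be followed for a positive time. -/
lemma poly_ray {k : ℕ} (a : Fin k → (E →L[ℝ] ℝ)) (b : Fin k → ℝ) {y d : E}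
    (hy : ∀ j, a j y ≤ b j) (hd : ∀ j, a j y = b j → a j d ≤ 0) :
    ∃ t0 : ℝ, 0 < t0 ∧ ∀ t : ℝ, 0 ≤ t → t ≤ t0 → ∀ j, a j (y + t • d) ≤ b j := by
  classical
  set J : Finset (Fin k) := Finset.univ.filter (fun j => 0 < a j d) with hJ
  have hstrict : ∀ j ∈ J, a j y < b j := by
    intro j hj
    rw [hJ, Finset.mem_filter] at hj
    rcases eq_or_lt_of_le (hy j) with h | h
    · exact absurd (hd j h) (not_le.mpr hj.2)
    · exact h
  by_cases hJne : J.Nonempty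
  · set t0 := J.inf' hJne (fun j => (b j - a j y) / a j d) with ht0
    refine ⟨t0, ?_, ?_⟩
    · rw [ht0, Finset.lt_inf'_iff]
      intro j hj
      have h1 : 0 < a j d := (Finset.mem_filter.mp hj).2
      exact div_pos (by linarith [hstrict j hj]) h1
    · intro t ht0' htt0 j
      have : a j (y + t • d) = a j y + t * a j d := by simp
      rw [this]
      by_cases hjJ : j ∈ J
      · have h1 : 0 < a j d := (Finset.mem_filter.mp hjJ).2
        have h2 : t0 ≤ (b j - a j y) / a j d := Finset.inf'_le _ hjJ
        have h3 : t ≤ (b j - a j y) / a j d := le_trans htt0 h2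
        have h4 : t * a j d ≤ b j - a j y := by
          rw [← le_div_iff₀ h1]; exact h3
        linarith
      · have h1 : a j d ≤ 0 := by
          by_contra hcon
          exact hjJ (Finset.mem_filter.mpr ⟨Finset.mem_univ j, not_le.mp hcon⟩)
        have := mul_nonpos_of_nonneg_of_nonpos ht0' h1
        linarith [hy j]
  · refine ⟨1, one_pos, ?_⟩
    intro t ht0' htt1 j
    have h1 : a j d ≤ 0 := by
      by_contra hcon
      exact hJne ⟨j, Finset.mem_filter.mpr ⟨Finset.mem_univ j, not_le.mp hcon⟩⟩
    have : a j (y + t • d) = a j y + t * a j d := by simp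
    rw [this]
    have := mul_nonpos_of_nonneg_of_nonpos ht0' h1
    linarith [hy j]

/-- From a Fréchet normal to `Ω` at a point of a convex subset `C ⊆ Ω`,
one gets a convex-analysis normal to `C`. -/
lemma fnc_nonpos_of_convex {Ω C : Set E} (hC : Convex ℝ C) (hCΩ : C ⊆ Ω) {z : E}
    (hz : z ∈ C) {ξ : E →L[ℝ] ℝ} (hξ : ξ ∈ fnc Ω z) {y : E} (hy : y ∈ C) :
    ξ (y - z) ≤ 0 := by
  apply nonpos_of_forall_pos_le (norm_nonneg (y - z))
  intro ε hε
  obtain ⟨δ, hδ, hδ'⟩ := hξ.2 ε hε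
  set s : ℝ := min 1 (δ / (‖y - z‖ + 1)) with hs
  have hs0 : 0 < s := lt_min one_pos (by positivity)
  have hs1 : s ≤ 1 := min_le_left _ _
  have hpt : z + s • (y - z) ∈ C := by
    have h1 : (1 - s) • z + s • y ∈ C := hC hz hy (by linarith) (le_of_lt hs0) (by ring)
    have h2 : z + s • (y - z) = (1 - s) • z + s • y := by
      rw [smul_sub, sub_smul, one_smul]; abel
    rwa [h2]
  have hnear : ‖z + s • (y - z) - z‖ < δ := by
    have h1 : ‖z + s • (y - z) - z‖ = s * ‖y - z‖ := by
      simp [norm_smul, abs_of_pos hs0]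
    rw [h1]
    have h2 : s ≤ δ / (‖y - z‖ + 1) := min_le_right _ _
    calc s * ‖y - z‖ ≤ (δ / (‖y - z‖ + 1)) * ‖y - z‖ :=
          mul_le_mul_of_nonneg_right h2 (norm_nonneg _)
      _ < δ := by
          rw [div_mul_eq_mul_div, div_lt_iff₀ (by positivity)]
          nlinarith [norm_nonneg (y - z)]
  have := hδ' (z + s • (y - z)) (hCΩ hpt) hnear
  have h3 : ξ (z + s • (y - z) - z) = s * ξ (y - z) := by simp
  have h4 : ‖z + s • (y - z) - z‖ = s * ‖y - z‖ := by
    simp [norm_smul, abs_of_pos hs0]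
  rw [h3, h4] at this
  have h5 : s * ξ (y - z) ≤ s * (ε * ‖y - z‖) := this.trans_eq (by ring)
  exact le_of_mul_le_mul_left h5 hs0

/-- Pigeonhole on sequences over a finite index. -/
lemma pigeon {p : ℕ} {Q : Fin p → ℕ → Prop} (h : ∀ k, ∃ i, Q i k) :
    ∃ i, ∃ᶠ k in atTop, Q i k := by
  by_contra hcon
  push_neg at hcon
  have : ∀ᶠ k in atTop, ∀ i, ¬ Q i k := eventually_all.mpr (fun i => hcon i)
  obtain ⟨k, hk⟩ := this.exists
  obtain ⟨i, hi⟩ := h k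
  exact hk i hi

lemma tendsto_apply_of_tendsto {ξk : ℕ → (E →L[ℝ] ℝ)} {ξ : E →L[ℝ] ℝ}
    {wk : ℕ → E} {w : E} (h1 : Tendsto ξk atTop (𝓝 ξ)) (h2 : Tendsto wk atTop (𝓝 w)) :
    Tendsto (fun k => ξk k (wk k)) atTop (𝓝 (ξ w)) := by
  have := (isBoundedBilinearMap_apply (𝕜 := ℝ) (E := E) (F := ℝ)).continuous
  exact (this.tendsto (ξ, w)).comp (h1.prodMk_nhds h2)

/-- Key sign lemma: directional limiting normals in a tangent direction are ≤ 0
on that direction, for unions of polyhedra. -/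
lemma dlnc_nonpos_dir {Ω : Set E} (hΩ : IsFinUnionPolyhedra Ω) {yb v : E}
    (hv : v ∈ tcone Ω yb) {μ : E →L[ℝ] ℝ} (hμ : μ ∈ dlnc Ω yb v) : μ v ≤ 0 := by
  obtain ⟨hyb, t, w, ξk, htpos, ht0, hwv, hξμ, hmem⟩ := hμ
  obtain ⟨p, P, hPoly, hPU⟩ := hΩ
  have hzΩ : ∀ k, yb + t k • w k ∈ Ω := fun k => (hmem k).1
  have hzP : ∀ k, ∃ i, yb + t k • w k ∈ P i := by
    intro k
    have := hzΩ k
    rw [hPU] at this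
    simpa using this
  obtain ⟨i, hifreq⟩ := pigeon hzP
  obtain ⟨φ, hφ, hφP⟩ := Filter.extraction_of_frequently_atTop hifreq
  obtain ⟨kk, a, b, hPi⟩ := hPoly i
  have hzyb : Tendsto (fun k => yb + t k • w k) atTop (𝓝 yb) := by
    have : Tendsto (fun k => t k • w k) atTop (𝓝 0) := by simpa using ht0.smul hwv
    simpa using tendsto_const_nhds.add this
  have hybP : yb ∈ P i := by
    have hcl : IsClosed (P i) := by rw [hPi]; exact poly_closed a b
    exact hcl.mem_of_tendsto (hzyb.comp hφ.tendsto_atTop) (Eventually.of_forall hφP)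
  -- active constraints at yb are ≤ 0 on v
  have hyineq : ∀ j, a j yb ≤ b j := by
    intro j
    have := hybP; rw [hPi] at this; exact this j
  have hactive : ∀ j, a j yb = b j → a j v ≤ 0 := by
    intro j hj
    have hwk : ∀ k, a j (w (φ k)) ≤ 0 := by
      intro k
      have hz := hφP k
      rw [hPi] at hz
      have h1 := hz j
      have h2 : a j (yb + t (φ k) • w (φ k)) = a j yb + t (φ k) * a j (w (φ k)) := by simp
      rw [h2, hj] at h1
      have h3 : t (φ k) * a j (w (φ k)) ≤ 0 := by linarith
      have := htpos (φ k)
      nlinarith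
    have hlim : Tendsto (fun k => a j (w (φ k))) atTop (𝓝 (a j v)) :=
      ((a j).continuous.tendsto v).comp (hwv.comp hφ.tendsto_atTop)
    exact le_of_tendsto_of_tendsto hlim tendsto_const_nhds
      (Eventually.of_forall hwk)
  obtain ⟨t0, ht0pos, ht0mem⟩ := poly_ray a b hyineq hactive
  have hy' : yb + t0 • v ∈ P i := by
    rw [hPi]; exact fun j => ht0mem t0 (le_of_lt ht0pos) le_rfl j
  have hPiconv : Convex ℝ (P i) := by rw [hPi]; exact poly_convex a b
  have hPiΩ : P i ⊆ Ω := by rw [hPU]; exact subset_iUnion P i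
  have hineq : ∀ k, t0 * ξk (φ k) v ≤ t (φ k) * (ξk (φ k) (w (φ k))) := by
    intro k
    have h1 := fnc_nonpos_of_convex hPiconv hPiΩ (hφP k) (hmem (φ k)) hy'
    have h2 : (yb + t0 • v) - (yb + t (φ k) • w (φ k)) = t0 • v - t (φ k) • w (φ k) := by
      abel
    rw [h2] at h1
    have h3 : ξk (φ k) (t0 • v - t (φ k) • w (φ k))
        = t0 * ξk (φ k) v - t (φ k) * ξk (φ k) (w (φ k)) := by simp
    rw [h3] at h1; linarith
  have hL : Tendsto (fun k => t0 * ξk (φ k) v) atTop (𝓝 (t0 * μ v)) := by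
    apply Tendsto.const_mul
    exact (tendsto_apply_of_tendsto (hξμ.comp hφ.tendsto_atTop) tendsto_const_nhds)
  have hR : Tendsto (fun k => t (φ k) * (ξk (φ k) (w (φ k)))) atTop (𝓝 0) := by
    have := (ht0.comp hφ.tendsto_atTop).mul
      (tendsto_apply_of_tendsto (hξμ.comp hφ.tendsto_atTop) (hwv.comp hφ.tendsto_atTop))
    simpa using this
  have : t0 * μ v ≤ 0 :=
    le_of_tendsto_of_tendsto hL hR (Eventually.of_forall hineq)
  nlinarith


lemma mink {m : ℕ} (L : List (Euc m →L[ℝ] ℝ)) :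
    ∃ (ι : Type) (_ : Fintype ι) (g : ι → Euc m),
      (∀ j, ∀ a ∈ L, a (g j) ≤ 0) ∧
      (∀ y : Euc m, (∀ a ∈ L, a y ≤ 0) →
        ∃ c : ι → ℝ, (∀ j, 0 ≤ c j) ∧ y = ∑ j, c j • g j) := by
  classical
  induction L with
  | nil =>
    set B := (EuclideanSpace.basisFun (Fin m) ℝ).toBasis with hB
    refine ⟨Fin m ⊕ Fin m, inferInstance, Sum.elim (fun i => B i) (fun i => -(B i)),
      by simp, ?_⟩
    intro y _
    refine ⟨Sum.elim (fun i => max (B.repr y i) 0) (fun i => max (-(B.repr y i)) 0),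
      ?_, ?_⟩
    · rintro (i | i) <;> simp [le_max_right]
    · rw [Fintype.sum_sum_type]
      simp only [Sum.elim_inl, Sum.elim_inr]
      have key : ∀ i : Fin m, max (B.repr y i) 0 • B i + max (-(B.repr y i)) 0 • (-(B i))
          = (B.repr y i) • B i := by
        intro i
        rw [smul_neg, ← sub_eq_add_neg, ← sub_smul]
        congr 1
        exact max_zero_sub_max_neg_zero_eq_self (B.repr y i)
      rw [← Finset.sum_add_distrib]
      simp_rw [key]
      exact (B.sum_repr y).symm
  | cons a L ih =>
    obtain ⟨ι, hι, g, hgcon, hgrep⟩ := ih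
    refine ⟨ι ⊕ ι × ι, inferInstance, ?_⟩
    set g' : ι ⊕ ι × ι → Euc m := Sum.elim
      (fun j => if a (g j) ≤ 0 then g j else 0)
      (fun pq => if 0 < a (g pq.1) ∧ a (g pq.2) < 0 then
        (a (g pq.1))⁻¹ • g pq.1 + (-(a (g pq.2)))⁻¹ • g pq.2 else 0) with hg'
    have hg'inl : ∀ j, g' (Sum.inl j) = if a (g j) ≤ 0 then g j else 0 := fun _ => rfl
    have hg'inr : ∀ pq : ι × ι, g' (Sum.inr pq) =
        if 0 < a (g pq.1) ∧ a (g pq.2) < 0 then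
          (a (g pq.1))⁻¹ • g pq.1 + (-(a (g pq.2)))⁻¹ • g pq.2 else 0 := fun _ => rfl
    refine ⟨g', ?_, ?_⟩
    · rintro (j | ⟨p, q⟩) a' ha'
      · rw [hg'inl]
        by_cases h : a (g j) ≤ 0
        · rw [if_pos h]
          rcases List.mem_cons.mp ha' with rfl | hm
          · exact h
          · exact hgcon j a' hm
        · rw [if_neg h]; simp
      · rw [hg'inr]
        by_cases h : 0 < a (g p) ∧ a (g q) < 0
        · rw [if_pos h]
          obtain ⟨hp, hq⟩ := h
          have hkey : ∀ b : Euc m →L[ℝ] ℝ, b ((a (g p))⁻¹ • g p + (-(a (g q)))⁻¹ • g q)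
              = (a (g p))⁻¹ * b (g p) + (-(a (g q)))⁻¹ * b (g q) := by
            intro b; simp
          rcases List.mem_cons.mp ha' with rfl | hm
          · rw [hkey a', inv_mul_cancel₀ (ne_of_gt hp)]
            have h6 : (-(a' (g q)))⁻¹ * a' (g q) = -1 := by
              rw [inv_mul_eq_div, div_eq_iff (by linarith : -(a' (g q)) ≠ 0)]; ring
            rw [h6]; norm_num
          · rw [hkey a']
            have h2 := hgcon p a' hm
            have h3 := hgcon q a' hm
            have h4 : (0:ℝ) ≤ (a (g p))⁻¹ := le_of_lt (inv_pos.mpr hp)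
            have h5 : (0:ℝ) ≤ (-(a (g q)))⁻¹ := le_of_lt (inv_pos.mpr (by linarith))
            nlinarith
        · rw [if_neg h]; simp
    · intro y hy
      have hay : a y ≤ 0 := hy a (List.mem_cons_self)
      obtain ⟨c, hc, hrep⟩ := hgrep y (fun a' ha' => hy a' (List.mem_cons_of_mem a ha'))
      set π : ι → ℝ := fun j => max (a (g j)) 0 with hπ
      set ν : ι → ℝ := fun j => max (-(a (g j))) 0 with hν
      have hπj : ∀ j, π j = max (a (g j)) 0 := fun _ => rfl
      have hνj : ∀ j, ν j = max (-(a (g j))) 0 := fun _ => rfl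
      have hπν : ∀ j, a (g j) = π j - ν j := by
        intro j; rw [hπj, hνj]
        exact (max_zero_sub_max_neg_zero_eq_self (a (g j))).symm
      have hπ0 : ∀ j, 0 ≤ π j := fun j => le_max_right _ _
      have hν0 : ∀ j, 0 ≤ ν j := fun j => le_max_right _ _
      have hπpos : ∀ j, 0 < a (g j) → π j = a (g j) := fun j h => max_eq_left (le_of_lt h)
      have hπnonpos : ∀ j, ¬ 0 < a (g j) → π j = 0 := fun j h => max_eq_right (not_lt.mp h)
      have hνneg : ∀ j, a (g j) < 0 → ν j = -(a (g j)) :=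
        fun j h => max_eq_left (by linarith)
      have hνnonneg : ∀ j, ¬ a (g j) < 0 → ν j = 0 :=
        fun j h => max_eq_right (by have := not_lt.mp h; linarith)
      set P : ℝ := ∑ j, c j * π j with hP
      set N : ℝ := ∑ j, c j * ν j with hN
      have hP0 : 0 ≤ P := Finset.sum_nonneg (fun j _ => mul_nonneg (hc j) (hπ0 j))
      have hN0 : 0 ≤ N := Finset.sum_nonneg (fun j _ => mul_nonneg (hc j) (hν0 j))
      have haysum : a y = P - N := by
        rw [hrep, map_sum]
        simp only [map_smul, smul_eq_mul]
        rw [hP, hN, ← Finset.sum_sub_distrib]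
        exact Finset.sum_congr rfl (fun j _ => by rw [hπν j]; ring)
      have hPN : P ≤ N := by linarith
      by_cases hNz : N = 0
      · have hPz : P = 0 := le_antisymm (by linarith) hP0
        have hterm0 : ∀ j ∈ Finset.univ, 0 ≤ c j * π j :=
          fun j _ => mul_nonneg (hc j) (hπ0 j)
        have hzero : ∀ j ∈ (Finset.univ : Finset ι), c j * π j = 0 :=
          (Finset.sum_eq_zero_iff_of_nonneg hterm0).mp (hP ▸ hPz)
        refine ⟨Sum.elim c (fun _ => 0), by rintro (j | pq) <;> simp [hc], ?_⟩
        rw [Fintype.sum_sum_type]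
        simp only [Sum.elim_inl, Sum.elim_inr, zero_smul, Finset.sum_const_zero, add_zero]
        rw [hrep]
        apply Finset.sum_congr rfl
        intro j _
        rw [hg'inl]
        by_cases h : a (g j) ≤ 0
        · rw [if_pos h]
        · rw [if_neg h]
          have hcj : c j = 0 := by
            have hz := hzero j (Finset.mem_univ j)
            rcases mul_eq_zero.mp hz with h1 | h1
            · exact h1
            · exfalso
              rw [hπpos j (not_le.mp h)] at h1
              exact (not_le.mp h).ne' h1
          rw [hcj]; simp
      · have hNpos : 0 < N := lt_of_le_of_ne hN0 (Ne.symm hNz)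
        set e1 : ι → ℝ := fun j => if a (g j) < 0 then c j * ((N - P)/N) else
          (if a (g j) = 0 then c j else 0) with he1
        have he1j : ∀ j, e1 j = if a (g j) < 0 then c j * ((N - P)/N) else
          (if a (g j) = 0 then c j else 0) := fun _ => rfl
        set K : ι × ι → ℝ := fun pq => (c pq.1 * π pq.1) * (c pq.2 * ν pq.2) / N with hK
        have hKj : ∀ pq : ι × ι, K pq = (c pq.1 * π pq.1) * (c pq.2 * ν pq.2) / N :=
          fun _ => rfl
        refine ⟨Sum.elim e1 K, ?_, ?_⟩
        · rintro (j | ⟨p, q⟩)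
          · simp only [Sum.elim_inl]
            rw [he1j]
            by_cases h1 : a (g j) < 0
            · rw [if_pos h1]
              exact mul_nonneg (hc j) (div_nonneg (by linarith) (le_of_lt hNpos))
            · rw [if_neg h1]
              by_cases h2 : a (g j) = 0
              · rw [if_pos h2]; exact hc j
              · rw [if_neg h2]
          · simp only [Sum.elim_inr]
            rw [hKj]
            apply div_nonneg _ (le_of_lt hNpos)
            exact mul_nonneg (mul_nonneg (hc p) (hπ0 p)) (mul_nonneg (hc q) (hν0 q))
        · rw [Fintype.sum_sum_type]
          simp only [Sum.elim_inl, Sum.elim_inr]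
          have h1 : ∑ j, e1 j • g' (Sum.inl j) = ∑ j, (e1 j) • g j := by
            apply Finset.sum_congr rfl
            intro j _
            rw [hg'inl]
            by_cases h : a (g j) ≤ 0
            · rw [if_pos h]
            · rw [if_neg h]
              have he0 : e1 j = 0 := by
                rw [he1j, if_neg (fun hh => h (le_of_lt hh)),
                  if_neg (fun hh => h (le_of_eq hh))]
              rw [he0]; simp
          have hterm : ∀ pq : ι × ι, K pq • g' (Sum.inr pq)
              = (K pq) • (((a (g pq.1))⁻¹) • g pq.1)
                + (K pq) • (((-(a (g pq.2)))⁻¹) • g pq.2) := by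
            rintro ⟨p, q⟩
            rw [hg'inr]
            by_cases h : 0 < a (g p) ∧ a (g q) < 0
            · rw [if_pos h, smul_add]
            · have hz : K (p, q) = 0 := by
                rw [hKj]
                rcases not_and_or.mp h with h1 | h1
                · rw [hπnonpos p h1]; ring_nf
                · rw [hνnonneg q h1]; ring_nf
              rw [hz]; simp
          have hsumq : ∀ p, ∑ q, K (p, q) = c p * π p := by
            intro p
            have hq : ∀ q, K (p, q) = (c p * π p / N) * (c q * ν q) := by
              intro q; rw [hKj]; ring
            rw [Finset.sum_congr rfl (fun q _ => hq q), ← Finset.mul_sum, ← hN]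
            field_simp
          have hsump : ∀ q, ∑ p, K (p, q) = (c q * ν q) * (P/N) := by
            intro q
            have hp : ∀ p, K (p, q) = ((c q * ν q)/N) * (c p * π p) := by
              intro p; rw [hKj]; ring
            rw [Finset.sum_congr rfl (fun p _ => hp p), ← Finset.mul_sum, ← hP]
            field_simp
            try ring
          have h2 : ∑ pq : ι × ι, K pq • g' (Sum.inr pq)
              = ∑ j, ((if 0 < a (g j) then c j else 0) • g j)
                + ∑ j, (((P/N) * (if a (g j) < 0 then c j else 0)) • g j) := by
            rw [Finset.sum_congr rfl (fun pq _ => hterm pq), Finset.sum_add_distrib]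
            congr 1
            · rw [Fintype.sum_prod_type]
              apply Finset.sum_congr rfl
              intro p _
              dsimp only
              rw [← Finset.sum_smul, hsumq p, smul_smul]
              by_cases h : 0 < a (g p)
              · rw [if_pos h]
                congr 1
                rw [hπpos p h, mul_assoc, mul_inv_cancel₀ (ne_of_gt h), mul_one]
              · rw [if_neg h, hπnonpos p h]
                simp
            · rw [Fintype.sum_prod_type, Finset.sum_comm]
              apply Finset.sum_congr rfl
              intro q _
              dsimp only
              rw [← Finset.sum_smul, hsump q, smul_smul]
              by_cases h : a (g q) < 0
              · rw [if_pos h]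
                congr 1
                rw [hνneg q h]
                have hne : a (g q) ≠ 0 := ne_of_lt h
                field_simp
              · rw [if_neg h, hνnonneg q h]
                simp
          rw [h1, h2, ← Finset.sum_add_distrib, ← Finset.sum_add_distrib]
          rw [hrep]
          apply Finset.sum_congr rfl
          intro j _
          rw [← add_smul, ← add_smul]
          congr 1
          rw [he1j]
          rcases lt_trichotomy (a (g j)) 0 with h | h | h
          · rw [if_pos h, if_neg (not_lt.mpr (le_of_lt h)), if_pos h]
            field_simp
            try ring
          · rw [if_neg (by rw [h]; exact lt_irrefl 0), if_pos h,
              if_neg (by rw [h]; exact lt_irrefl 0),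
              if_neg (by rw [h]; exact lt_irrefl 0)]
            simp
          · rw [if_neg (not_lt.mpr (le_of_lt h)), if_neg (ne_of_gt h), if_pos h,
              if_neg (not_lt.mpr (le_of_lt h))]
            simp

variable {E : Type*} [NormedAddCommGroup E] [NormedSpace ℝ E]

/-- The cone defined by a finite list of homogeneous inequalities. -/
def coneOf (L : List (E →L[ℝ] ℝ)) : Set E := {y | ∀ a ∈ L, a y ≤ 0}

lemma coneOf_zero (L : List (E →L[ℝ] ℝ)) : (0:E) ∈ coneOf L := by
  intro a _; simp

lemma coneOf_smul {L : List (E →L[ℝ] ℝ)} {y : E} {s : ℝ} (hs : 0 ≤ s)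
    (hy : y ∈ coneOf L) : s • y ∈ coneOf L := by
  intro a ha
  have : a (s • y) = s * a y := by simp
  rw [this]
  exact mul_nonpos_of_nonneg_of_nonpos hs (hy a ha)

lemma coneOf_add {L : List (E →L[ℝ] ℝ)} {y z : E} (hy : y ∈ coneOf L)
    (hz : z ∈ coneOf L) : y + z ∈ coneOf L := by
  intro a ha
  have : a (y + z) = a y + a z := by simp
  rw [this]
  linarith [hy a ha, hz a ha]

/-- Lifting along an interior recession direction. -/
lemma slift (L : List (E →L[ℝ] ℝ)) {z y : E} (hz : ∀ a ∈ L, a z ≤ 0)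
    (hy : ∀ a ∈ L, a z = 0 → a y ≤ 0) :
    ∃ s : ℝ, 0 ≤ s ∧ ∀ a ∈ L, a (y + s • z) ≤ 0 := by
  induction L with
  | nil => exact ⟨0, le_rfl, by simp⟩
  | cons a L ih =>
    obtain ⟨s₁, hs₁, hs₁'⟩ := ih (fun b hb => hz b (List.mem_cons_of_mem a hb))
      (fun b hb => hy b (List.mem_cons_of_mem a hb))
    have hza : a z ≤ 0 := hz a (List.mem_cons_self)
    set s₂ : ℝ := if h : a z < 0 then max 0 ((a y)/(-(a z))) else 0 with hs₂def
    have hs₂0 : 0 ≤ s₂ := by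
      rw [hs₂def]
      by_cases h : a z < 0
      · rw [dif_pos h]; exact le_max_left _ _
      · rw [dif_neg h]
    refine ⟨max s₁ s₂, le_trans hs₁ (le_max_left _ _), ?_⟩
    intro b hb
    have hbz : b z ≤ 0 := hz b hb
    have heval : b (y + (max s₁ s₂) • z) = b y + (max s₁ s₂) * b z := by simp
    rw [heval]
    rcases List.mem_cons.mp hb with rfl | hm
    · -- head constraint
      by_cases h : b z < 0
      · have h1 : (b y)/(-(b z)) ≤ s₂ := by
          rw [hs₂def, dif_pos h]; exact le_max_right _ _
        have h2 : (b y)/(-(b z)) ≤ max s₁ s₂ := le_trans h1 (le_max_right _ _)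
        have h3 : 0 < -(b z) := by linarith
        rw [div_le_iff₀ h3] at h2
        nlinarith
      · have h0 : b z = 0 := le_antisymm hbz (not_lt.mp h)
        rw [h0, mul_zero, add_zero]
        exact hy b (List.mem_cons_self) h0
    · -- tail constraint
      have h1 := hs₁' b hm
      have h2 : b (y + s₁ • z) = b y + s₁ * b z := by simp
      rw [h2] at h1
      have h3 : (max s₁ s₂) * b z ≤ s₁ * b z :=
        mul_le_mul_of_nonpos_right (le_max_left _ _) hbz
      linarith


lemma mink' {m : ℕ} (L : List (Euc m →L[ℝ] ℝ)) :
    ∃ (n : ℕ) (g : Fin n → Euc m),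
      (∀ j, g j ∈ coneOf L) ∧
      (∀ y ∈ coneOf L, ∃ c : Fin n → ℝ, (∀ j, 0 ≤ c j) ∧ y = ∑ j, c j • g j) := by
  obtain ⟨ι, hι, g, hg1, hg2⟩ := mink L
  letI := hι
  refine ⟨Fintype.card ι, fun k => g ((Fintype.equivFin ι).symm k), ?_, ?_⟩
  · intro j a ha; exact hg1 _ a ha
  · intro y hy
    obtain ⟨c, hc, hrep⟩ := hg2 y hy
    refine ⟨fun k => c ((Fintype.equivFin ι).symm k), fun k => hc _, ?_⟩
    rw [hrep]
    exact Fintype.sum_equiv (Fintype.equivFin ι) _ _ (fun j => by simp)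

set_option maxHeartbeats 1000000 in
/-- The key extension lemma: given finitely many H-cones and a functional `ψ`
nonnegative on each `Cᵢ ∩ R`, there is an extension `β` of `ψ|_R` and a point `z`
in the union with `β z = 0` and `β ≥ 0` on every cone containing `z`. -/
lemma ext_lemma {m : ℕ} : ∀ (d : ℕ) (R : Submodule ℝ (Euc m)) (ι : Type)
    (_ : Fintype ι) (_ : Nonempty ι) (LL : ι → List (Euc m →L[ℝ] ℝ))
    (ψ : Euc m →L[ℝ] ℝ),
    (Module.finrank ℝ
      ↥(R ⊔ ⨆ i, Submodule.span ℝ (coneOf (LL i)) : Submodule ℝ (Euc m)) ≤ d) →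
    (∀ i, ∀ y ∈ coneOf (LL i), y ∈ R → 0 ≤ ψ y) →
    ∃ (β : Euc m →L[ℝ] ℝ) (z : Euc m), (∀ r ∈ R, β r = ψ r) ∧
      (∃ i, z ∈ coneOf (LL i)) ∧ β z = 0 ∧
      ∀ i, z ∈ coneOf (LL i) → ∀ y ∈ coneOf (LL i), 0 ≤ β y := by
  intro d
  induction d with
  | zero =>
    intro R ι hFin hNe LL ψ hrank hψ
    refine ⟨ψ, 0, fun r _ => rfl, ⟨Classical.arbitrary ι, coneOf_zero _⟩, map_zero ψ, ?_⟩
    · -- everything is in `R` since the relevant span is trivial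
      intro i _ y hy
      apply hψ i y hy
      have hbot : (R ⊔ ⨆ i, Submodule.span ℝ (coneOf (LL i)) : Submodule ℝ (Euc m)) = ⊥ :=
        Submodule.finrank_eq_zero.mp (Nat.le_zero.mp hrank)
      have h1 : y ∈ Submodule.span ℝ (coneOf (LL i)) := Submodule.subset_span hy
      have h2 : Submodule.span ℝ (coneOf (LL i)) ≤
          (R ⊔ ⨆ i, Submodule.span ℝ (coneOf (LL i)) : Submodule ℝ (Euc m)) :=
        le_trans (le_iSup (fun i => Submodule.span ℝ (coneOf (LL i))) i) le_sup_right
      have h3 : y ∈ (⊥ : Submodule ℝ (Euc m)) := hbot ▸ h2 h1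
      rw [(Submodule.mem_bot ℝ).mp h3]
      exact zero_mem R
  | succ d IH =>
    intro R ι hFin hNe LL ψ hrank hψ
    classical
    letI := hFin
    by_cases hsub : ∀ i, ∀ y ∈ coneOf (LL i), y ∈ R
    · refine ⟨ψ, 0, fun r _ => rfl, ⟨Classical.arbitrary ι, coneOf_zero _⟩, map_zero ψ, ?_⟩
      intro i _ y hy
      exact hψ i y hy (hsub i y hy)
    · push_neg at hsub
      obtain ⟨i₀, y₀, hy₀cone, hy₀R⟩ := hsub
      -- separating functional τ vanishing on R with τ y₀ ≠ 0
      set w : Euc m := y₀ - (Submodule.orthogonalProjection R y₀ : Euc m) with hw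
      have hwR : w ∈ Rᗮ := Submodule.sub_starProjection_mem_orthogonal (K := R) y₀
      have hwne : w ≠ 0 := by
        intro h
        apply hy₀R
        have h2 : y₀ = (Submodule.orthogonalProjection R y₀ : Euc m) := by
          have := sub_eq_zero.mp h; exact this
        rw [h2]; exact (Submodule.orthogonalProjection R y₀).2
      set τ : Euc m →L[ℝ] ℝ := (innerSL ℝ) w with hτ
      have hτR : ∀ r ∈ R, τ r = 0 := by
        intro r hr
        have h1 := (Submodule.mem_orthogonal R w).mp hwR r hr
        have h2 : (inner ℝ w r : ℝ) = 0 := by rw [real_inner_comm]; exact h1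
        exact h2
      have hτy₀ : τ y₀ = ‖w‖^2 := by
        have hdecomp : y₀ = w + (Submodule.orthogonalProjection R y₀ : Euc m) := by rw [hw]; abel
        rw [hτ]
        calc (innerSL ℝ) w y₀ = inner ℝ w y₀ := rfl
          _ = inner ℝ w (w + ((Submodule.orthogonalProjection R y₀ : Euc m))) := by rw [← hdecomp]
          _ = (inner ℝ w w : ℝ) + inner ℝ w ((Submodule.orthogonalProjection R y₀ : Euc m)) := by
              rw [inner_add_right]
          _ = ‖w‖^2 + 0 := by
              rw [real_inner_self_eq_norm_sq]
              congr 1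
              have := (Submodule.mem_orthogonal R w).mp hwR _
                (Submodule.orthogonalProjection R y₀).2
              rw [real_inner_comm]; exact this
          _ = ‖w‖^2 := by ring
      have hτy₀pos : 0 < τ y₀ := by
        rw [hτy₀]
        have := norm_pos_iff.mpr hwne
        positivity
      -- the cut cone system
      set LL' : ι → List (Euc m →L[ℝ] ℝ) := fun i => τ :: (-τ) :: LL i with hLL'
      have hcone'iff : ∀ i y, y ∈ coneOf (LL' i) ↔ (y ∈ coneOf (LL i) ∧ τ y = 0) := by
        intro i y
        constructor
        · intro hy
          have h1 := hy τ (List.mem_cons_self)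
          have h2 := hy (-τ) (List.mem_cons_of_mem _ (List.mem_cons_self))
          have h3 : -(τ y) ≤ 0 := by simpa using h2
          exact ⟨fun a ha => hy a (List.mem_cons_of_mem _ (List.mem_cons_of_mem _ ha)),
            le_antisymm h1 (by linarith)⟩
        · rintro ⟨hy, hyτ⟩ a ha
          rcases List.mem_cons.mp ha with rfl | ha2
          · exact le_of_eq hyτ
          rcases List.mem_cons.mp ha2 with rfl | ha3
          · have : (-τ) y = -(τ y) := rfl
            rw [this, hyτ]; norm_num
          · exact hy a ha3
      -- the rank drops
      have hrank' : Module.finrank ℝ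
          ↥(R ⊔ ⨆ i, Submodule.span ℝ (coneOf (LL' i)) : Submodule ℝ (Euc m)) ≤ d := by
        set Kτ : Submodule ℝ (Euc m) := LinearMap.ker (τ : Euc m →ₗ[ℝ] ℝ) with hKτ
        have hKτmem : ∀ y : Euc m, y ∈ Kτ ↔ τ y = 0 := by
          intro y; rw [hKτ]; exact LinearMap.mem_ker
        set M : Submodule ℝ (Euc m) := R ⊔ ⨆ i, Submodule.span ℝ (coneOf (LL i)) with hM
        have hle1 : (R ⊔ ⨆ i, Submodule.span ℝ (coneOf (LL' i)) : Submodule ℝ (Euc m))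
            ≤ M ⊓ Kτ := by
          apply sup_le
          · refine le_inf le_sup_left ?_
            intro r hr
            exact (hKτmem r).mpr (hτR r hr)
          · apply iSup_le
            intro i
            apply le_inf
            · refine le_trans (Submodule.span_mono ?_)
                (le_trans (le_iSup (fun i => Submodule.span ℝ (coneOf (LL i))) i)
                  le_sup_right)
              intro y hy
              exact ((hcone'iff i y).mp hy).1
            · rw [Submodule.span_le]
              intro y hy
              exact (hKτmem y).mpr ((hcone'iff i y).mp hy).2
        have hy₀M : y₀ ∈ M := by
          have h1 : y₀ ∈ Submodule.span ℝ (coneOf (LL i₀)) := Submodule.subset_span hy₀cone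
          exact (le_trans (le_iSup (fun i => Submodule.span ℝ (coneOf (LL i))) i₀)
            le_sup_right) h1
        have hlt : M ⊓ Kτ < M := by
          apply lt_of_le_of_ne inf_le_left
          intro heq
          have h2 : y₀ ∈ M ⊓ Kτ := heq.symm ▸ hy₀M
          have h3 : τ y₀ = 0 := (hKτmem y₀).mp h2.2
          rw [h3] at hτy₀pos
          exact lt_irrefl 0 hτy₀pos
        have h4 : Module.finrank ℝ
            ↥(R ⊔ ⨆ i, Submodule.span ℝ (coneOf (LL' i)) : Submodule ℝ (Euc m))
            ≤ Module.finrank ℝ ↥(M ⊓ Kτ) := Submodule.finrank_mono hle1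
        have h5 : Module.finrank ℝ ↥(M ⊓ Kτ) < Module.finrank ℝ ↥M :=
          Submodule.finrank_lt_finrank_of_lt hlt
        have h6 : Module.finrank ℝ ↥M ≤ d + 1 := hrank
        omega
      obtain ⟨β₁, z₁, hβ₁R, hz₁ex, hβ₁z₁, hβ₁pos⟩ :=
        IH R ι hFin hNe LL' ψ hrank'
          (fun i y hy hyR => hψ i y ((hcone'iff i y).mp hy).1 hyR)
      obtain ⟨i₁, hz₁i₁⟩ := hz₁ex
      have hz₁τ : τ z₁ = 0 := ((hcone'iff i₁ z₁).mp hz₁i₁).2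
      have hz₁c : z₁ ∈ coneOf (LL i₁) := ((hcone'iff i₁ z₁).mp hz₁i₁).1
      -- stage-2 positivity
      have stage2 : ∀ i, z₁ ∈ coneOf (LL i) →
          ∀ y, (∀ a ∈ LL i, a z₁ = 0 → a y ≤ 0) → τ y = 0 → 0 ≤ β₁ y := by
        intro i hi y hyD hyτ
        obtain ⟨s, hs0, hs⟩ := slift (LL i) hi hyD
        have hτsum : τ (y + s • z₁) = 0 := by
          have : τ (y + s • z₁) = τ y + s * τ z₁ := by simp
          rw [this, hyτ, hz₁τ]; ring
        have hmem' : y + s • z₁ ∈ coneOf (LL' i) := (hcone'iff i _).mpr ⟨hs, hτsum⟩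
        have hz₁' : z₁ ∈ coneOf (LL' i) := (hcone'iff i z₁).mpr ⟨hi, hz₁τ⟩
        have hpos := hβ₁pos i hz₁' _ hmem'
        have hval : β₁ (y + s • z₁) = β₁ y + s * β₁ z₁ := by simp
        rw [hval, hβ₁z₁, mul_zero, add_zero] at hpos
        exact hpos
      -- localized cones and generators
      set LD : ι → List (Euc m →L[ℝ] ℝ) :=
        fun i => (LL i).filter (fun a => decide (a z₁ = 0)) with hLD
      have hLDmem : ∀ (i : ι) (a : Euc m →L[ℝ] ℝ), a ∈ LD i ↔ (a ∈ LL i ∧ a z₁ = 0) := by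
        intro i a
        rw [hLD]
        simp [List.mem_filter]
      have hDiff : ∀ (i : ι) (y : Euc m), y ∈ coneOf (LD i) ↔
          (∀ a ∈ LL i, a z₁ = 0 → a y ≤ 0) := by
        intro i y
        constructor
        · intro hy a ha h0
          exact hy a ((hLDmem i a).mpr ⟨ha, h0⟩)
        · intro h a ha
          obtain ⟨h1, h2⟩ := (hLDmem i a).mp ha
          exact h a h1 h2
      choose nF gF hgF1 hgF2 using fun i => mink' (LD i)
      set e : Euc m := (τ y₀)⁻¹ • y₀ with he
      have hτe : τ e = 1 := by
        have : τ ((τ y₀)⁻¹ • y₀) = (τ y₀)⁻¹ * τ y₀ := by simp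
        rw [he, this, inv_mul_cancel₀ (ne_of_gt hτy₀pos)]
      set q : Euc m → ℝ := fun g => β₁ e - β₁ g / τ g with hq
      have hqval : ∀ g : Euc m, q g = β₁ e - β₁ g / τ g := fun _ => rfl
      set Tp : Finset (Σ i : ι, Fin (nF i)) := Finset.univ.filter
        (fun s => z₁ ∈ coneOf (LL s.1) ∧ 0 < τ (gF s.1 s.2)) with hTp
      set Tm : Finset (Σ i : ι, Fin (nF i)) := Finset.univ.filter
        (fun s => z₁ ∈ coneOf (LL s.1) ∧ τ (gF s.1 s.2) < 0) with hTm
      have hTpmem : ∀ s : (Σ i : ι, Fin (nF i)), s ∈ Tp ↔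
          (z₁ ∈ coneOf (LL s.1) ∧ 0 < τ (gF s.1 s.2)) := by
        intro s; rw [hTp]; simp
      have hTmmem : ∀ s : (Σ i : ι, Fin (nF i)), s ∈ Tm ↔
          (z₁ ∈ coneOf (LL s.1) ∧ τ (gF s.1 s.2) < 0) := by
        intro s; rw [hTm]; simp
      have hγz₂ : ∃ (γ : ℝ) (z₂ : Euc m),
          (∃ i₂, z₁ ∈ coneOf (LL i₂) ∧ z₂ ∈ coneOf (LD i₂)) ∧
          (β₁ z₂ + (γ - β₁ e) * τ z₂ = 0) ∧
          (∀ i, z₁ ∈ coneOf (LL i) → z₂ ∈ coneOf (LD i) →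
            ∀ j : Fin (nF i), 0 ≤ β₁ (gF i j) + (γ - β₁ e) * τ (gF i j)) := by
        by_cases hT : Tp.Nonempty
        · obtain ⟨S, hST, hSmax⟩ := Finset.exists_max_image Tp (fun s => q (gF s.1 s.2)) hT
          obtain ⟨hS1, hS2⟩ := (hTpmem S).mp hST
          have hSne : τ (gF S.1 S.2) ≠ 0 := ne_of_gt hS2
          refine ⟨q (gF S.1 S.2), gF S.1 S.2, ⟨S.1, hS1, hgF1 S.1 S.2⟩, ?_, ?_⟩
          · rw [hqval]
            field_simp
            try ring
          · intro i hi hz₂D j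
            rcases lt_trichotomy (τ (gF i j)) 0 with hneg | hzero | hpos
            · -- pairwise comparison inside `LD i`
              set gn := gF i j with hgn
              set gh := gF S.1 S.2 with hgh
              have hw'D : (τ gh) • gn + (-(τ gn)) • gh ∈ coneOf (LD i) :=
                coneOf_add (coneOf_smul (le_of_lt hS2) (hgF1 i j))
                  (coneOf_smul (by linarith) hz₂D)
              have hτw' : τ ((τ gh) • gn + (-(τ gn)) • gh) = 0 := by
                have : τ ((τ gh) • gn + (-(τ gn)) • gh)
                    = (τ gh) * τ gn + (-(τ gn)) * τ gh := by simp
                rw [this]; ring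
              have hst := stage2 i hi _ ((hDiff i _).mp hw'D) hτw'
              have hβw' : β₁ ((τ gh) • gn + (-(τ gn)) • gh)
                  = (τ gh) * β₁ gn + (-(τ gn)) * β₁ gh := by simp
              rw [hβw'] at hst
              have h2 : β₁ gn + (q gh - β₁ e) * τ gn
                  = ((τ gh) * β₁ gn - (τ gn) * β₁ gh)/(τ gh) := by
                rw [hqval]
                field_simp
                ring
              rw [h2]
              apply div_nonneg _ (le_of_lt hS2)
              linarith
            · have hst := stage2 i hi (gF i j) ((hDiff i _).mp (hgF1 i j)) hzero
              rw [hzero, mul_zero, add_zero]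
              exact hst
            · have hmem : (⟨i, j⟩ : Σ i : ι, Fin (nF i)) ∈ Tp :=
                (hTpmem _).mpr ⟨hi, hpos⟩
              have hle := hSmax ⟨i, j⟩ hmem
              have hne : τ (gF i j) ≠ 0 := ne_of_gt hpos
              have h2 : β₁ (gF i j) + (q (gF i j) - β₁ e) * τ (gF i j) = 0 := by
                rw [hqval]
                field_simp
                try ring
              have h3 : (q (gF i j) - β₁ e) * τ (gF i j)
                  ≤ (q (gF S.1 S.2) - β₁ e) * τ (gF i j) :=
                mul_le_mul_of_nonneg_right (by linarith) (le_of_lt hpos)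
              linarith
        · by_cases hTm' : Tm.Nonempty
          · obtain ⟨S, hST, hSmin⟩ := Finset.exists_min_image Tm (fun s => q (gF s.1 s.2)) hTm'
            refine ⟨q (gF S.1 S.2), 0, ⟨i₁, hz₁c, coneOf_zero _⟩, by simp, ?_⟩
            intro i hi _ j
            rcases lt_trichotomy (τ (gF i j)) 0 with hneg | hzero | hpos
            · have hmem : (⟨i, j⟩ : Σ i : ι, Fin (nF i)) ∈ Tm :=
                (hTmmem _).mpr ⟨hi, hneg⟩
              have hle := hSmin ⟨i, j⟩ hmem
              have hne : τ (gF i j) ≠ 0 := ne_of_lt hneg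
              have h2 : β₁ (gF i j) + (q (gF i j) - β₁ e) * τ (gF i j) = 0 := by
                rw [hqval]
                field_simp
                try ring
              have h3 : (q (gF i j) - β₁ e) * τ (gF i j)
                  ≤ (q (gF S.1 S.2) - β₁ e) * τ (gF i j) :=
                mul_le_mul_of_nonpos_right (by linarith) (le_of_lt hneg)
              linarith
            · have hst := stage2 i hi (gF i j) ((hDiff i _).mp (hgF1 i j)) hzero
              rw [hzero, mul_zero, add_zero]
              exact hst
            · exact absurd ⟨(⟨i, j⟩ : Σ i : ι, Fin (nF i)), (hTpmem _).mpr ⟨hi, hpos⟩⟩ hT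
          · refine ⟨0, 0, ⟨i₁, hz₁c, coneOf_zero _⟩, by simp, ?_⟩
            intro i hi _ j
            rcases lt_trichotomy (τ (gF i j)) 0 with hneg | hzero | hpos
            · exact absurd ⟨(⟨i, j⟩ : Σ i : ι, Fin (nF i)), (hTmmem _).mpr ⟨hi, hneg⟩⟩ hTm'
            · have hst := stage2 i hi (gF i j) ((hDiff i _).mp (hgF1 i j)) hzero
              rw [hzero, mul_zero, add_zero]
              exact hst
            · exact absurd ⟨(⟨i, j⟩ : Σ i : ι, Fin (nF i)), (hTpmem _).mpr ⟨hi, hpos⟩⟩ hT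
      obtain ⟨γ, z₂, ⟨i₂, hi₂1, hi₂2⟩, hz₂val, hgenpos⟩ := hγz₂
      set β : Euc m →L[ℝ] ℝ := β₁ + (γ - β₁ e) • τ with hβ
      have hβap : ∀ y : Euc m, β y = β₁ y + (γ - β₁ e) * τ y := by
        intro y; rw [hβ]; simp
      -- the perturbation size
      set SA : Finset (Euc m →L[ℝ] ℝ) :=
        Finset.univ.biUnion (fun i : ι => (LL i).toFinset) with hSA
      set SA' : Finset (Euc m →L[ℝ] ℝ) := SA.filter (fun a => a z₁ ≠ 0) with hSA'
      set ε : ℝ := if h : SA'.Nonempty then SA'.inf' h (fun a => |a z₁| / (|a z₂| + 1))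
        else 1 with hε
      have hεpos : 0 < ε := by
        rw [hε]
        split
        · rename_i h
          rw [Finset.lt_inf'_iff]
          intro a ha
          have h1 : a z₁ ≠ 0 := by
            have := (Finset.mem_filter.mp ha).2
            simpa using this
          have h2 : 0 < |a z₁| := abs_pos.mpr h1
          positivity
        · exact one_pos
      have hεkey : ∀ i, ∀ a ∈ LL i, a z₁ ≠ 0 → ε * |a z₂| < |a z₁| := by
        intro i a ha hne
        have hmemSA : a ∈ SA := by
          rw [hSA]
          exact Finset.mem_biUnion.mpr ⟨i, Finset.mem_univ i, List.mem_toFinset.mpr ha⟩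
        have hmem : a ∈ SA' := by
          rw [hSA']
          exact Finset.mem_filter.mpr ⟨hmemSA, by simpa using hne⟩
        have h1 : ε ≤ |a z₁| / (|a z₂| + 1) := by
          rw [hε, dif_pos ⟨a, hmem⟩]
          exact Finset.inf'_le _ hmem
        have h2 : 0 < |a z₁| := abs_pos.mpr hne
        calc ε * |a z₂| ≤ (|a z₁| / (|a z₂| + 1)) * |a z₂| :=
              mul_le_mul_of_nonneg_right h1 (abs_nonneg _)
          _ < |a z₁| := by
              rw [div_mul_eq_mul_div, div_lt_iff₀ (by positivity)]
              nlinarith [abs_nonneg (a z₂)]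
      set zf : Euc m := z₁ + ε • z₂ with hzf
      have hzfeval : ∀ a : Euc m →L[ℝ] ℝ, a zf = a z₁ + ε * a z₂ := by
        intro a; rw [hzf]; simp
      have hforce : ∀ i, zf ∈ coneOf (LL i) →
          (z₁ ∈ coneOf (LL i) ∧ z₂ ∈ coneOf (LD i)) := by
        intro i hi
        have hz₁i : ∀ a ∈ LL i, a z₁ ≤ 0 := by
          intro a ha
          by_contra hcon
          push_neg at hcon
          have h1 := hi a ha
          rw [hzfeval] at h1
          have h3 := hεkey i a ha (ne_of_gt hcon)
          have h4 : |a z₁| = a z₁ := abs_of_pos hcon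
          have h5 : -(|a z₂|) ≤ a z₂ := neg_abs_le _
          nlinarith [hεpos]
        refine ⟨hz₁i, (hDiff i z₂).mpr ?_⟩
        intro a ha h0
        have h1 := hi a ha
        rw [hzfeval, h0, zero_add] at h1
        by_contra hcon
        push_neg at hcon
        nlinarith [hεpos]
      have hzfmem : zf ∈ coneOf (LL i₂) := by
        intro a ha
        rw [hzfeval]
        by_cases h0 : a z₁ = 0
        · have h1 := (hDiff i₂ z₂).mp hi₂2 a ha h0
          rw [h0, zero_add]
          exact mul_nonpos_of_nonneg_of_nonpos (le_of_lt hεpos) h1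
        · have h1 : a z₁ < 0 := lt_of_le_of_ne (hi₂1 a ha) h0
          have h2 := hεkey i₂ a ha h0
          have h3 : a z₂ ≤ |a z₂| := le_abs_self _
          have h4 : |a z₁| = -(a z₁) := abs_of_neg h1
          nlinarith [hεpos]
      refine ⟨β, zf, ?_, ⟨i₂, hzfmem⟩, ?_, ?_⟩
      · intro r hr
        rw [hβap, hτR r hr, mul_zero, add_zero]
        exact hβ₁R r hr
      · have h1 : β zf = β z₁ + ε * β z₂ := by rw [hzf]; simp
        have h2 : β z₁ = 0 := by rw [hβap, hβ₁z₁, hz₁τ]; ring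
        have h3 : β z₂ = 0 := by rw [hβap]; exact hz₂val
        rw [h1, h2, h3]; ring
      · intro i hzfi y hyi
        obtain ⟨hz₁i, hz₂i⟩ := hforce i hzfi
        have hyD : y ∈ coneOf (LD i) := by
          intro a ha
          exact hyi a ((hLDmem i a).mp ha).1
        obtain ⟨c, hc, hrep⟩ := hgF2 i y hyD
        have hval : β y = ∑ j, c j * β (gF i j) := by
          rw [hrep, map_sum]
          exact Finset.sum_congr rfl (fun j _ => by simp)
        rw [hval]
        apply Finset.sum_nonneg
        intro j _
        apply mul_nonneg (hc j)
        rw [hβap]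
        exact hgenpos i hz₁i hz₂i j


end Dev

namespace Dev

/-- Factoring a functional vanishing on the kernel through the range. -/
lemma factor_through {n m : ℕ} (A : Euc n →L[ℝ] Euc m) (h : Euc n →L[ℝ] ℝ)
    (hker : ∀ x, A x = 0 → h x = 0) :
    ∃ ψ : Euc m →L[ℝ] ℝ, ∀ x, ψ (A x) = h x := by
  classical
  set A' : Euc n →ₗ[ℝ] Euc m := A.toLinearMap with hA'
  set h' : Euc n →ₗ[ℝ] ℝ := h.toLinearMap with hh'
  have hle : LinearMap.ker A' ≤ LinearMap.ker h' := by
    intro x hx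
    exact LinearMap.mem_ker.mpr (hker x (LinearMap.mem_ker.mp hx))
  set hbar := (LinearMap.ker A').liftQ h' hle with hhbar
  set eqv := A'.quotKerEquivRange with heqv
  set g : LinearMap.range A' →ₗ[ℝ] ℝ := hbar ∘ₗ (eqv.symm.toLinearMap) with hg
  set Pr := Submodule.orthogonalProjection (LinearMap.range A') with hPr
  set ψℓ : Euc m →ₗ[ℝ] ℝ := g ∘ₗ (Pr.toLinearMap) with hψℓ
  refine ⟨ψℓ.toContinuousLinearMap, ?_⟩
  intro x
  have hmem : A x ∈ LinearMap.range A' := ⟨x, rfl⟩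
  have h1 : Pr (A x) = ⟨A x, hmem⟩ := by
    have := Submodule.orthogonalProjection_mem_subspace_eq_self (K := LinearMap.range A')
      ⟨A x, hmem⟩
    rw [hPr]
    exact this
  have h2 : eqv (Submodule.Quotient.mk x) = ⟨A x, hmem⟩ := by
    apply Subtype.ext
    exact LinearMap.quotKerEquivRange_apply_mk A' x
  have h3 : g ⟨A x, hmem⟩ = h x := by
    rw [← h2]
    show hbar (eqv.symm (eqv (Submodule.Quotient.mk x))) = h x
    rw [LinearEquiv.symm_apply_apply]
    exact Submodule.liftQ_apply _ h' x
  have h4 : ψℓ.toContinuousLinearMap (A x) = ψℓ (A x) := rfl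
  rw [h4]
  have h5 : ψℓ (A x) = g (Pr (A x)) := rfl
  rw [h5, h1, h3]

set_option maxHeartbeats 4000000 in
/-- The core implication (b) ⟹ (c). -/
lemma b_implies_c {n m : ℕ} (f : Euc n → ℝ) (F : Euc n → Euc m)
    (Ω : Set (Euc m)) (hΩ : IsFinUnionPolyhedra Ω) (xb : Euc n)
    (hfeas : F xb ∈ Ω)
    (hb : ∀ u : Euc n, fderiv ℝ F xb u ∈ tcone Ω (F xb) → 0 ≤ fderiv ℝ f xb u) :
    ∀ u : Euc n, fderiv ℝ F xb u ∈ tcone Ω (F xb) → fderiv ℝ f xb u ≤ 0 →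
      (Lam1 f F Ω xb u).Nonempty := by
  classical
  intro u hu hcrit
  set A : Euc n →L[ℝ] Euc m := fderiv ℝ F xb with hA
  set h : Euc n →L[ℝ] ℝ := fderiv ℝ f xb with hh
  set yb : Euc m := F xb with hyb
  set v : Euc m := A u with hv
  have hu' : v ∈ tcone Ω yb := hu
  have hu0 : h u = 0 := le_antisymm hcrit (hb u hu)
  obtain ⟨p, P, hPoly, hPU⟩ := hΩ
  choose ka aa ba hP using hPoly
  have hPmem : ∀ (i : Fin p) (x : Euc m), x ∈ P i ↔ ∀ j, aa i j x ≤ ba i j := by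
    intro i x; rw [hP i]; exact Iff.rfl
  have hPclosed : ∀ i : Fin p, IsClosed (P i) := by
    intro i; rw [hP i]; exact poly_closed (aa i) (ba i)
  set Lact : Fin p → List (Euc m →L[ℝ] ℝ) := fun i =>
    ((List.finRange (ka i)).filter (fun j => decide (aa i j yb = ba i j))).map (aa i)
    with hLact
  have hLactMem : ∀ (i : Fin p) (a : Euc m →L[ℝ] ℝ),
      a ∈ Lact i ↔ ∃ j, aa i j yb = ba i j ∧ aa i j = a := by
    intro i a; rw [hLact]; simp [List.mem_filter]
  -- ray lemma
  have hray : ∀ (i : Fin p), yb ∈ P i → ∀ dd : Euc m, (∀ a ∈ Lact i, a dd ≤ 0) →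
      ∃ t0 : ℝ, 0 < t0 ∧ ∀ t : ℝ, 0 ≤ t → t ≤ t0 → yb + t • dd ∈ P i := by
    intro i hyi dd hdd
    obtain ⟨t0, ht0, hmem⟩ := poly_ray (aa i) (ba i)
      (fun j => (hPmem i yb).mp hyi j)
      (fun j hj => hdd (aa i j) ((hLactMem i _).mpr ⟨j, hj, rfl⟩))
    exact ⟨t0, ht0, fun t h1 h2 => (hPmem i _).mpr (hmem t h1 h2)⟩
  have htc : ∀ (i : Fin p), yb ∈ P i → ∀ dd : Euc m, (∀ a ∈ Lact i, a dd ≤ 0) →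
      dd ∈ tcone Ω yb := by
    intro i hyi dd hdd
    obtain ⟨t0, ht0, hmem⟩ := hray i hyi dd hdd
    refine ⟨hfeas, fun k => t0/((k:ℝ)+1), fun _ => dd, fun k => by positivity,
      ?_, tendsto_const_nhds, fun k => ?_⟩
    · have h1 : (fun k : ℕ => t0/((k:ℝ)+1)) = fun k : ℕ => t0 * (1/((k:ℝ)+1)) := by
        funext k; ring
      rw [h1]
      simpa using tendsto_one_div_succ.const_mul t0
    · rw [hPU]
      refine mem_iUnion.mpr ⟨i, hmem _ (by positivity) ?_⟩
      rw [div_le_iff₀ (by positivity)]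
      nlinarith [ht0, Nat.cast_nonneg (α := ℝ) k]
  -- existence of an active index
  have hex : ∃ i : Fin p, yb ∈ P i ∧ ∀ a ∈ Lact i, a v ≤ 0 := by
    obtain ⟨_, t, wseq, htpos, ht0, hwv, hmemseq⟩ := hu'
    have hzP : ∀ k, ∃ i, yb + t k • wseq k ∈ P i := by
      intro k
      have := hmemseq k
      rw [hPU] at this
      exact mem_iUnion.mp this
    obtain ⟨i, hifreq⟩ := pigeon hzP
    obtain ⟨φ, hφ, hφP⟩ := Filter.extraction_of_frequently_atTop hifreq
    have hzyb : Tendsto (fun k => yb + t k • wseq k) atTop (𝓝 yb) := by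
      have : Tendsto (fun k => t k • wseq k) atTop (𝓝 0) := by simpa using ht0.smul hwv
      simpa using tendsto_const_nhds.add this
    have hybP : yb ∈ P i :=
      (hPclosed i).mem_of_tendsto (hzyb.comp hφ.tendsto_atTop) (Eventually.of_forall hφP)
    refine ⟨i, hybP, ?_⟩
    intro a ha
    obtain ⟨j, hj, rfl⟩ := (hLactMem i a).mp ha
    have hwk : ∀ k, aa i j (wseq (φ k)) ≤ 0 := by
      intro k
      have hz := (hPmem i _).mp (hφP k) j
      have h2 : aa i j (yb + t (φ k) • wseq (φ k))
          = aa i j yb + t (φ k) * aa i j (wseq (φ k)) := by simp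
      rw [h2, hj] at hz
      have h3 : t (φ k) * aa i j (wseq (φ k)) ≤ 0 := by linarith
      nlinarith [htpos (φ k)]
    have hlim : Tendsto (fun k => aa i j (wseq (φ k))) atTop (𝓝 (aa i j v)) :=
      ((aa i j).continuous.tendsto v).comp (hwv.comp hφ.tendsto_atTop)
    exact le_of_tendsto_of_tendsto hlim tendsto_const_nhds (Eventually.of_forall hwk)
  set ιT := {i : Fin p // yb ∈ P i ∧ ∀ a ∈ Lact i, a v ≤ 0} with hιT
  haveI hNeι : Nonempty ιT := ⟨⟨hex.choose, hex.choose_spec⟩⟩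
  set LS : ιT → List (Euc m →L[ℝ] ℝ) := fun i =>
    (Lact i.1).filter (fun a => decide (a v = 0)) with hLS
  have hLSmem : ∀ (i : ιT) (a : Euc m →L[ℝ] ℝ), a ∈ LS i ↔ (a ∈ Lact i.1 ∧ a v = 0) := by
    intro i a; rw [hLS]; simp [List.mem_filter]
  have hLSiff : ∀ (i : ιT) (y : Euc m), y ∈ coneOf (LS i) ↔
      (∀ a ∈ Lact i.1, a v = 0 → a y ≤ 0) := by
    intro i y
    constructor
    · intro hy a ha h0
      exact hy a ((hLSmem i a).mpr ⟨ha, h0⟩)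
    · intro hcond a ha
      obtain ⟨h1, h2⟩ := (hLSmem i a).mp ha
      exact hcond a h1 h2
  -- the factored functional
  have hker : ∀ x, A x = 0 → h x = 0 := by
    intro x hx
    have h1 : A x ∈ tcone Ω yb := by rw [hx]; exact tcone_zero_mem hfeas
    have h2 : A (-x) ∈ tcone Ω yb := by
      rw [map_neg, hx, neg_zero]; exact tcone_zero_mem hfeas
    have h3 := hb x h1
    have h4 := hb (-x) h2
    have h5 : h (-x) = -(h x) := by simp
    rw [h5] at h4
    linarith
  obtain ⟨ψ, hψA⟩ := factor_through A h hker
  -- hypothesis of the extension lemma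
  have hhyp : ∀ i : ιT, ∀ y ∈ coneOf (LS i),
      y ∈ LinearMap.range (A.toLinearMap) → 0 ≤ ψ y := by
    intro i y hy hyR
    obtain ⟨x, hx⟩ := hyR
    obtain ⟨s, hs0, hs⟩ := slift (Lact i.1) i.2.2
      (fun a ha h0 => (hLSiff i y).mp hy a ha h0)
    have hd' : ∀ a ∈ Lact i.1, a (y + (s+1) • v) ≤ 0 := by
      intro a ha
      have h1 := hs a ha
      have h2 := i.2.2 a ha
      have h3 : a (y + (s+1) • v) = a (y + s • v) + a v := by
        have e1 : a (y + (s+1) • v) = a y + (s+1) * a v := by simp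
        have e2 : a (y + s • v) = a y + s * a v := by simp
        rw [e1, e2]; ring
      rw [h3]; linarith
    have htc' : y + (s+1) • v ∈ tcone Ω yb := htc i.1 i.2.1 _ hd'
    have hAx : A (x + (s+1) • u) = y + (s+1) • v := by
      rw [map_add, map_smul]
      have : A x = y := hx
      rw [this]
    have h3 := hb (x + (s+1) • u) (by rw [hAx]; exact htc')
    have h4 : h (x + (s+1) • u) = h x + (s+1) * h u := by simp
    have h5 : ψ y = h x := by rw [← hx]; exact hψA x
    rw [h5]
    rw [h4, hu0] at h3
    linarith
  obtain ⟨β, z, hβR, hzex, hβz, hβpos⟩ := ext_lemma (Module.finrank ℝ (Euc m))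
    (LinearMap.range (A.toLinearMap)) ιT inferInstance hNeι LS ψ
    (Submodule.finrank_le _) hhyp
  obtain ⟨i₂, hzi₂⟩ := hzex
  set μ : Euc m →L[ℝ] ℝ := -β with hμ
  have hβv : β v = 0 := by
    have hvR : v ∈ LinearMap.range (A.toLinearMap) := ⟨u, rfl⟩
    rw [hβR v hvR]
    have : ψ v = h u := hψA u
    rw [this, hu0]
  -- perturbation size ε
  set SB : Finset (Euc m →L[ℝ] ℝ) :=
    Finset.univ.biUnion (fun i : Fin p => (Lact i).toFinset) with hSB
  set SB' : Finset (Euc m →L[ℝ] ℝ) := SB.filter (fun a => a v ≠ 0) with hSB'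
  set ε : ℝ := if hB : SB'.Nonempty then SB'.inf' hB (fun a => |a v| / (|a z| + 1))
    else 1 with hε
  have hεpos : 0 < ε := by
    rw [hε]
    split
    · rename_i hB
      rw [Finset.lt_inf'_iff]
      intro a ha
      have h1 : a v ≠ 0 := by
        have := (Finset.mem_filter.mp ha).2
        simpa using this
      have h2 : 0 < |a v| := abs_pos.mpr h1
      positivity
    · exact one_pos
  have hεkey : ∀ (i : Fin p), ∀ a ∈ Lact i, a v ≠ 0 → ε * |a z| < |a v| := by
    intro i a ha hne
    have hmemSB : a ∈ SB := by
      rw [hSB]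
      exact Finset.mem_biUnion.mpr ⟨i, Finset.mem_univ i, List.mem_toFinset.mpr ha⟩
    have hmem : a ∈ SB' := by
      rw [hSB']
      exact Finset.mem_filter.mpr ⟨hmemSB, by simpa using hne⟩
    have h1 : ε ≤ |a v| / (|a z| + 1) := by
      rw [hε, dif_pos ⟨a, hmem⟩]
      exact Finset.inf'_le _ hmem
    have h2 : 0 < |a v| := abs_pos.mpr hne
    calc ε * |a z| ≤ (|a v| / (|a z| + 1)) * |a z| :=
          mul_le_mul_of_nonneg_right h1 (abs_nonneg _)
      _ < |a v| := by
          rw [div_mul_eq_mul_div, div_lt_iff₀ (by positivity)]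
          nlinarith [abs_nonneg (a z)]
  -- global safety radius
  set BAD : Finset (Fin p) := Finset.univ.filter
    (fun i => yb ∉ P i ∧ (P i).Nonempty) with hBAD
  set δ : ℝ := if hB : BAD.Nonempty then
    BAD.inf' hB (fun i => Metric.infDist yb (P i)) else 1 with hδ
  have hδpos : 0 < δ := by
    rw [hδ]
    split
    · rename_i hB
      rw [Finset.lt_inf'_iff]
      intro i hi
      have h1 := (Finset.mem_filter.mp hi).2
      have h2 : yb ∉ P i := by
        by_contra hcon
        simp [hcon] at h1
      have h3 : (P i).Nonempty := by
        rcases h1 with ⟨-, h3⟩; exact h3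
      exact ((hPclosed i).notMem_iff_infDist_pos h3).mp h2
    · exact one_pos
  have hδkey : ∀ (i : Fin p) (x : Euc m), x ∈ P i → dist yb x < δ → yb ∈ P i := by
    intro i x hx hdist
    by_contra hcon
    have hne : (P i).Nonempty := ⟨x, hx⟩
    have h1 : i ∈ BAD := by
      rw [hBAD]; exact Finset.mem_filter.mpr ⟨Finset.mem_univ i, hcon, hne⟩
    have h2 : δ ≤ Metric.infDist yb (P i) := by
      rw [hδ, dif_pos ⟨i, h1⟩]
      exact Finset.inf'_le _ h1
    have h3 : Metric.infDist yb (P i) ≤ dist yb x := Metric.infDist_le_dist_of_mem hx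
    linarith
  -- direction sequence
  set dd : ℕ → Euc m := fun k => v + (ε/((k:ℝ)+1)) • z with hdd
  have hddlim : Tendsto dd atTop (𝓝 v) := by
    have h1 : Tendsto (fun k : ℕ => ε * (1/((k:ℝ)+1))) atTop (𝓝 0) := by
      simpa using tendsto_one_div_succ.const_mul ε
    have h2 : Tendsto (fun k : ℕ => (ε * (1/((k:ℝ)+1))) • z) atTop (𝓝 ((0:ℝ) • z)) :=
      h1.smul_const z
    rw [zero_smul] at h2
    have h3 : (fun k : ℕ => v + (ε/((k:ℝ)+1)) • z)
        = fun k : ℕ => v + (ε * (1/((k:ℝ)+1))) • z := by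
      funext k; congr 1; congr 1; ring
    rw [hdd, h3]
    simpa using tendsto_const_nhds.add h2
  -- sign forcing
  have hsign : ∀ (i : Fin p), yb ∈ P i → ∀ k : ℕ, (∀ a ∈ Lact i, a (dd k) ≤ 0) →
      ((∀ a ∈ Lact i, a v ≤ 0) ∧ (∀ a ∈ Lact i, a v = 0 → a z ≤ 0)) := by
    intro i hyi k hddle
    have hεk : 0 < ε/((k:ℝ)+1) ∧ ε/((k:ℝ)+1) ≤ ε := by
      constructor
      · positivity
      · rw [div_le_iff₀ (by positivity)]
        nlinarith [Nat.cast_nonneg (α := ℝ) k, hεpos]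
    have hstep : ∀ a ∈ Lact i, a v ≤ 0 ∧ (a v = 0 → a z ≤ 0) := by
      intro a ha
      have h1 := hddle a ha
      have h2 : a (dd k) = a v + (ε/((k:ℝ)+1)) * a z := by rw [hdd]; simp
      rw [h2] at h1
      constructor
      · by_contra hcon
        push_neg at hcon
        have h3 := hεkey i a ha (ne_of_gt hcon)
        have h4 : |a v| = a v := abs_of_pos hcon
        have h5 : -(|a z|) ≤ a z := neg_abs_le _
        have h6 : (ε/((k:ℝ)+1)) * a z ≥ -((ε/((k:ℝ)+1)) * |a z|) := by nlinarith [hεk.1]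
        have h7 : (ε/((k:ℝ)+1)) * |a z| ≤ ε * |a z| := by
          apply mul_le_mul_of_nonneg_right hεk.2 (abs_nonneg _)
        linarith
      · intro h0
        rw [h0, zero_add] at h1
        by_contra hcon
        push_neg at hcon
        nlinarith [hεk.1]
    exact ⟨fun a ha => (hstep a ha).1, fun a ha => (hstep a ha).2⟩
  -- the sequence dd stays in the cone of i₂
  have hddcone : ∀ k, ∀ a ∈ Lact i₂.1, a (dd k) ≤ 0 := by
    intro k a ha
    have h2 : a (dd k) = a v + (ε/((k:ℝ)+1)) * a z := by rw [hdd]; simp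
    rw [h2]
    have hεk : 0 < ε/((k:ℝ)+1) ∧ ε/((k:ℝ)+1) ≤ ε := by
      constructor
      · positivity
      · rw [div_le_iff₀ (by positivity)]
        nlinarith [Nat.cast_nonneg (α := ℝ) k, hεpos]
    by_cases h0 : a v = 0
    · have h1 : a z ≤ 0 := (hLSiff i₂ z).mp hzi₂ a ha h0
      rw [h0, zero_add]
      exact mul_nonpos_of_nonneg_of_nonpos (le_of_lt hεk.1) h1
    · have h1 : a v < 0 := lt_of_le_of_ne (i₂.2.2 a ha) h0
      have h3 := hεkey i₂.1 a ha h0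
      have h4 : |a v| = -(a v) := abs_of_neg h1
      have h5 : a z ≤ |a z| := le_abs_self _
      have h7 : (ε/((k:ℝ)+1)) * a z ≤ ε * |a z| := by
        calc (ε/((k:ℝ)+1)) * a z ≤ (ε/((k:ℝ)+1)) * |a z| :=
              mul_le_mul_of_nonneg_left h5 (le_of_lt hεk.1)
          _ ≤ ε * |a z| := mul_le_mul_of_nonneg_right hεk.2 (abs_nonneg _)
      linarith
  -- choose the step sizes
  have hchoice : ∀ k : ℕ, ∃ tkk : ℝ, 0 < tkk ∧ tkk ≤ 1/((k:ℝ)+1) ∧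
      ‖tkk • dd k‖ < δ ∧ yb + tkk • dd k ∈ P i₂.1 := by
    intro k
    obtain ⟨t0, ht0, hmem⟩ := hray i₂.1 i₂.2.1 (dd k) (hddcone k)
    set tkk := min t0 (min (1/((k:ℝ)+1)) (δ/(‖dd k‖+1))) with htkk
    have htkkpos : 0 < tkk := by
      rw [htkk]
      apply lt_min ht0
      apply lt_min
      · positivity
      · positivity
    refine ⟨tkk, htkkpos, ?_, ?_, hmem tkk (le_of_lt htkkpos) (min_le_left _ _)⟩
    · exact le_trans (min_le_right _ _) (min_le_left _ _)
    · have h1 : tkk ≤ δ/(‖dd k‖+1) := le_trans (min_le_right _ _) (min_le_right _ _)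
      have h2 : ‖tkk • dd k‖ = tkk * ‖dd k‖ := by
        rw [norm_smul, Real.norm_eq_abs, abs_of_pos htkkpos]
      rw [h2]
      calc tkk * ‖dd k‖ ≤ (δ/(‖dd k‖+1)) * ‖dd k‖ :=
            mul_le_mul_of_nonneg_right h1 (norm_nonneg _)
        _ < δ := by
            rw [div_mul_eq_mul_div, div_lt_iff₀ (by positivity)]
            nlinarith [norm_nonneg (dd k), hδpos]
  choose tk htk1 htk2 htk3 htk4 using hchoice
  -- Fréchet normality of μ at the points of the sequence
  have hfnck : ∀ k, μ ∈ fnc Ω (yb + tk k • dd k) := by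
    intro k
    set Pt : Euc m := yb + tk k • dd k with hPt
    have hPtΩ : Pt ∈ Ω := by
      rw [hPU]
      exact mem_iUnion.mpr ⟨i₂.1, htk4 k⟩
    refine ⟨hPtΩ, ?_⟩
    intro ε' hε'
    -- local safety radius at Pt
    set BADk : Finset (Fin p) := Finset.univ.filter
      (fun i => Pt ∉ P i ∧ (P i).Nonempty) with hBADk
    set δk : ℝ := if hB : BADk.Nonempty then
      BADk.inf' hB (fun i => Metric.infDist Pt (P i)) else 1 with hδk
    have hδkpos : 0 < δk := by
      rw [hδk]
      split
      · rename_i hB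
        rw [Finset.lt_inf'_iff]
        intro i hi
        have h1 := (Finset.mem_filter.mp hi).2
        have h2 : Pt ∉ P i := by
          by_contra hcon
          simp [hcon] at h1
        have h3 : (P i).Nonempty := by rcases h1 with ⟨-, h3⟩; exact h3
        exact ((hPclosed i).notMem_iff_infDist_pos h3).mp h2
      · exact one_pos
    refine ⟨δk, hδkpos, ?_⟩
    intro y hyΩ hynear
    have hyP : ∃ i, y ∈ P i := by
      rw [hPU] at hyΩ
      exact mem_iUnion.mp hyΩ
    obtain ⟨i, hyi⟩ := hyP
    -- Pt belongs to P i as well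
    have hPti : Pt ∈ P i := by
      by_contra hcon
      have hne : (P i).Nonempty := ⟨y, hyi⟩
      have h1 : i ∈ BADk := by
        rw [hBADk]; exact Finset.mem_filter.mpr ⟨Finset.mem_univ i, hcon, hne⟩
      have h2 : δk ≤ Metric.infDist Pt (P i) := by
        rw [hδk, dif_pos ⟨i, h1⟩]
        exact Finset.inf'_le _ h1
      have h3 : Metric.infDist Pt (P i) ≤ dist Pt y := Metric.infDist_le_dist_of_mem hyi
      have h4 : dist Pt y < δk := by
        rw [dist_comm, dist_eq_norm]
        exact hynear
      linarith
    -- and yb belongs to P i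
    have hybi : yb ∈ P i := by
      apply hδkey i Pt hPti
      have h1 : dist yb Pt = ‖tk k • dd k‖ := by
        rw [hPt, dist_eq_norm]
        simp
      rw [h1]
      exact htk3 k
    -- forcing the signs for i
    have hactPt : ∀ a ∈ Lact i, a (dd k) ≤ 0 := by
      intro a ha
      obtain ⟨j, hj, rfl⟩ := (hLactMem i a).mp ha
      have h1 := (hPmem i Pt).mp hPti j
      have h2 : aa i j Pt = aa i j yb + tk k * aa i j (dd k) := by
        rw [hPt]; simp
      rw [h2, hj] at h1
      have h3 : tk k * aa i j (dd k) ≤ 0 := by linarith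
      nlinarith [htk1 k]
    obtain ⟨hvsign, hzsign⟩ := hsign i hybi k hactPt
    -- the subtype index
    set iT : ιT := ⟨i, hybi, hvsign⟩ with hiT
    have hzLS : z ∈ coneOf (LS iT) := (hLSiff iT z).mpr (fun a ha h0 => hzsign a ha h0)
    -- positivity of β on the cone of i
    have hyβ : 0 ≤ β (y - yb) := by
      apply hβpos iT hzLS
      apply (hLSiff iT (y - yb)).mpr
      intro a ha _
      obtain ⟨j, hj, rfl⟩ := (hLactMem i a).mp ha
      have h1 := (hPmem i y).mp hyi j
      have h2 : aa i j (y - yb) = aa i j y - aa i j yb := by simp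
      rw [h2, hj]
      linarith
    -- conclusion
    have hβdd : β (dd k) = 0 := by
      have h1 : β (dd k) = β v + (ε/((k:ℝ)+1)) * β z := by rw [hdd]; simp
      rw [h1, hβv, hβz]; ring
    have hdecomp : y - Pt = (y - yb) - tk k • dd k := by rw [hPt]; abel
    have hμval : μ (y - Pt) = -(β (y - yb)) + tk k * β (dd k) := by
      rw [hμ, hdecomp]
      simp
      ring
    rw [hμval, hβdd, mul_zero, add_zero]
    have h6 : -(β (y - yb)) ≤ 0 := by linarith
    calc -(β (y - yb)) ≤ 0 := h6
      _ ≤ ε' * ‖y - Pt‖ := by positivity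
  -- assemble the multiplier
  refine ⟨μ, ⟨hfeas, tk, dd, fun _ => μ, htk1, ?_, hddlim, tendsto_const_nhds, hfnck⟩, ?_⟩
  · apply squeeze_zero (fun k => le_of_lt (htk1 k)) htk2 tendsto_one_div_succ
  · apply ContinuousLinearMap.ext
    intro x
    have h1 : (fderiv ℝ f xb + μ.comp (fderiv ℝ F xb)) x = h x + μ (A x) := rfl
    rw [h1]
    have h2 : μ (A x) = -(β (A x)) := by rw [hμ]; simp
    have h3 : β (A x) = ψ (A x) := hβR (A x) ⟨x, rfl⟩
    rw [h2, h3, hψA x]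
    simp

end Dev

namespace Dev

lemma d_implies_b {n m N : ℕ} (f : Euc n → ℝ) (F : Euc n → Euc m)
    (Ω : Set (Euc m)) (hΩ : IsFinUnionPolyhedra Ω) (xb : Euc n)
    (uu : Fin N → Euc n)
    (huu : ∀ i, fderiv ℝ F xb (uu i) ∈ tcone Ω (F xb))
    (hgen : convexHull ℝ {u : Euc n | fderiv ℝ F xb u ∈ tcone Ω (F xb)} =
      {x : Euc n | ∃ α : Fin N → ℝ, (∀ i, 0 ≤ α i) ∧ x = ∑ i, α i • uu i})
    (hd : ∀ i, fderiv ℝ F xb (uu i) ∈ tcone Ω (F xb) → fderiv ℝ f xb (uu i) ≤ 0 →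
      (Lam1 f F Ω xb (uu i)).Nonempty) :
    ∀ u : Euc n, fderiv ℝ F xb u ∈ tcone Ω (F xb) → 0 ≤ fderiv ℝ f xb u := by
  intro u hu
  have hgens : ∀ i, 0 ≤ fderiv ℝ f xb (uu i) := by
    intro i
    rcases le_or_gt (fderiv ℝ f xb (uu i)) 0 with hle | hlt
    · obtain ⟨μ, hμd, hμe⟩ := hd i (huu i) hle
      have h1 : μ (fderiv ℝ F xb (uu i)) ≤ 0 := dlnc_nonpos_dir hΩ (huu i) hμd
      have h2 : fderiv ℝ f xb (uu i) + μ (fderiv ℝ F xb (uu i)) = 0 := by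
        have h3 := congrArg (fun T : Euc n →L[ℝ] ℝ => T (uu i)) hμe
        simpa using h3
      linarith
    · exact le_of_lt hlt
  have humem : u ∈ convexHull ℝ {u : Euc n | fderiv ℝ F xb u ∈ tcone Ω (F xb)} :=
    subset_convexHull ℝ _ hu
  rw [hgen] at humem
  obtain ⟨α, hα, hsum⟩ := humem
  rw [hsum, map_sum]
  apply Finset.sum_nonneg
  intro i _
  have h1 : (fderiv ℝ f xb) (α i • uu i) = α i * fderiv ℝ f xb (uu i) := by simp
  rw [h1]
  exact mul_nonneg (hα i) (hgens i)

end Dev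

/-- Theorem 3.9: under GGCQ and finite generation of `conv T_lin(x̄)`,
B-stationarity, first-order optimality on `T_lin(x̄)`, extended M-stationarity
and extended M-stationarity along the generators are all equivalent. -/
theorem stmt9 {n m N : ℕ}
    (f : Euc n → ℝ) (F : Euc n → Euc m)
    (hf : ContDiff ℝ 1 f) (hF : ContDiff ℝ 1 F)
    (Ω : Set (Euc m)) (hΩ : IsFinUnionPolyhedra Ω)
    (xb : Euc n) (hfeas : F xb ∈ Ω)
    (hGGCQ : fnc {x | F x ∈ Ω} xb =
      fnc {u : Euc n | fderiv ℝ F xb u ∈ tcone Ω (F xb)} 0)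
    (uu : Fin N → Euc n)
    (huu : ∀ i, fderiv ℝ F xb (uu i) ∈ tcone Ω (F xb))
    (hgen : convexHull ℝ {u : Euc n | fderiv ℝ F xb u ∈ tcone Ω (F xb)} =
      {x : Euc n | ∃ α : Fin N → ℝ, (∀ i, 0 ≤ α i) ∧ x = ∑ i, α i • uu i}) :
    ((∀ u ∈ tcone {x | F x ∈ Ω} xb, 0 ≤ fderiv ℝ f xb u) ↔
      (∀ u : Euc n, fderiv ℝ F xb u ∈ tcone Ω (F xb) → 0 ≤ fderiv ℝ f xb u)) ∧
    ((∀ u : Euc n, fderiv ℝ F xb u ∈ tcone Ω (F xb) → 0 ≤ fderiv ℝ f xb u) ↔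
      (∀ u : Euc n, fderiv ℝ F xb u ∈ tcone Ω (F xb) → fderiv ℝ f xb u ≤ 0 →
        (Lam1 f F Ω xb u).Nonempty)) ∧
    ((∀ u : Euc n, fderiv ℝ F xb u ∈ tcone Ω (F xb) → fderiv ℝ f xb u ≤ 0 →
        (Lam1 f F Ω xb u).Nonempty) ↔
      (∀ i, fderiv ℝ F xb (uu i) ∈ tcone Ω (F xb) → fderiv ℝ f xb (uu i) ≤ 0 →
        (Lam1 f F Ω xb (uu i)).Nonempty)) := by
  have hfeas' : xb ∈ {x | F x ∈ Ω} := hfeas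
  have hTlin0 : (0 : Euc n) ∈ {u : Euc n | fderiv ℝ F xb u ∈ tcone Ω (F xb)} := by
    show fderiv ℝ F xb 0 ∈ tcone Ω (F xb)
    rw [map_zero]
    exact Dev.tcone_zero_mem hfeas
  -- (a) → (b)
  have hab : (∀ u ∈ tcone {x | F x ∈ Ω} xb, 0 ≤ fderiv ℝ f xb u) →
      (∀ u : Euc n, fderiv ℝ F xb u ∈ tcone Ω (F xb) → 0 ≤ fderiv ℝ f xb u) := by
    intro ha u hu
    have h1 : -(fderiv ℝ f xb) ∈ fnc {x | F x ∈ Ω} xb := by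
      apply Dev.mem_fnc_of_nonpos_on_tcone hfeas'
      intro w hw
      have := ha w hw
      simp only [ContinuousLinearMap.neg_apply]
      linarith
    rw [hGGCQ] at h1
    have h2 : u ∈ tcone {u : Euc n | fderiv ℝ F xb u ∈ tcone Ω (F xb)} (0 : Euc n) := by
      refine ⟨hTlin0, fun k => 1/((k:ℝ)+1), fun _ => u, fun k => by positivity,
        Dev.tendsto_one_div_succ, tendsto_const_nhds, fun k => ?_⟩
      show fderiv ℝ F xb (0 + (1/((k:ℝ)+1)) • u) ∈ tcone Ω (F xb)
      rw [zero_add, map_smul]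
      exact Dev.tcone_smul_mem (by positivity) hu
    have h3 := Dev.fnc_nonpos_on_tcone h1 h2
    simp only [ContinuousLinearMap.neg_apply] at h3
    linarith
  -- (b) → (a)
  have hba : (∀ u : Euc n, fderiv ℝ F xb u ∈ tcone Ω (F xb) → 0 ≤ fderiv ℝ f xb u) →
      (∀ u ∈ tcone {x | F x ∈ Ω} xb, 0 ≤ fderiv ℝ f xb u) := by
    intro hb u hu
    have h1 : -(fderiv ℝ f xb) ∈
        fnc {u : Euc n | fderiv ℝ F xb u ∈ tcone Ω (F xb)} 0 := by
      refine ⟨hTlin0, fun ε hε => ⟨1, one_pos, fun y hy _ => ?_⟩⟩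
      have h2 : 0 ≤ fderiv ℝ f xb y := hb y hy
      have h3 : (-(fderiv ℝ f xb)) (y - 0) = -(fderiv ℝ f xb y) := by simp
      rw [h3]
      have h4 : (0:ℝ) ≤ ε * ‖y - 0‖ := by positivity
      linarith
    rw [← hGGCQ] at h1
    have h3 := Dev.fnc_nonpos_on_tcone h1 hu
    simp only [ContinuousLinearMap.neg_apply] at h3
    linarith
  -- (b) → (c)
  have hbc := Dev.b_implies_c f F Ω hΩ xb hfeas
  -- (d) → (b)
  have hdb := Dev.d_implies_b f F Ω hΩ xb uu huu hgen
  refine ⟨⟨hab, hba⟩, ⟨hbc, ?_⟩, ⟨fun hc i => hc (uu i), fun hd => hbc (hdb hd)⟩⟩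
  · intro hc
    exact hdb (fun i => hc (uu i))
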